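/- arXiv:2405.03785 — 2 statements merged into one kernel-verified Lean document; each statement's English description precedes it below -/
import Mathlib

section
/- Let f: 𝔄 → ℭ be a team embedding of τ-structures, and let 𝔅 be the τ-structure with domain B = {f(a) : a ∈ A}, with R^𝔅 = f(R^𝔄) ∩ B^{ar(R)} for every relation symbol R ∈ τ, with graph(F^𝔅) = f(graph F^𝔄) ∩ B^{ar(F)+1} for every function symbol F ∈ τ, and with c^𝔅 = f(c^𝔄) for every constant symbol c ∈ τ. Then: (i) these interpretations are well defined and 𝔅 is a substructure of ℭ; (ii) the map g: R(𝔄) → R(𝔅) defined by g(X) = f(X) ∩ B^n for X ⊆ A^n is a team isomorphism 𝔄 → 𝔅 (a total, element-surjective partial team isomorphism); (iii) if f is moreover an elementary team embedding, then f ∘ g⁻¹ is an elementary team embedding and 𝔅 is an elementary substructure of ℭ. -/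
open FirstOrder Language Set

universe u v w x

namespace TeamSem

/-- A purely relational language consisting of `k` fresh relation symbols with
prescribed arities. -/
def relLang (k : ℕ) (ar : Fin k → ℕ) : FirstOrder.Language where
  Functions := fun _ => Empty
  Relations := fun n => {i : Fin k // ar i = n}

/-- Interpret the `k` fresh relation symbols by the given relations on `M`. -/
def relStructure {k : ℕ} {ar : Fin k → ℕ} {M : Type w}
    (S : ∀ i : Fin k, Set (Fin (ar i) → M)) : (relLang k ar).Structure M where
  funMap := fun f _ => f.elim
  RelMap := fun R v => (fun j => v (Fin.cast R.2 j)) ∈ S R.1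

/-- Satisfaction of a first-order sentence over `L` together with `k` fresh relation
symbols, in the expansion of `M` interpreting the fresh symbols by `S`. -/
def RealizeWith {L : FirstOrder.Language.{u, v}} (M : Type w) [L.Structure M] {k : ℕ} {ar : Fin k → ℕ}
    (φ : (L.sum (relLang k ar)).Sentence) (S : ∀ i : Fin k, Set (Fin (ar i) → M)) : Prop :=
  letI := relStructure S
  M ⊨ φ

/-- An existential second-order sentence over `L`: finitely many fresh relation symbols
together with a first-order sentence over the enlarged language. -/
structure ESOSentence (L : FirstOrder.Language.{u, v}) where
  k : ℕ
  ar : Fin k → ℕ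
  toSentence : (L.sum (relLang k ar)).Sentence

/-- Satisfaction of an existential second-order sentence. -/
def ESOSentence.Realize {L : FirstOrder.Language.{u, v}} (ψ : ESOSentence L) (M : Type w)
    [L.Structure M] : Prop :=
  ∃ S : ∀ i : Fin ψ.k, Set (Fin (ψ.ar i) → M), RealizeWith M ψ.toSentence S

/-- The Cartesian product of an `n`-ary and an `m`-ary relation. -/
def teamProd {A : Type w} {n m : ℕ} (X : Set (Fin n → A)) (Y : Set (Fin m → A)) :
    Set (Fin (n + m) → A) :=
  {s | (fun i => s (Fin.castAdd m i)) ∈ X ∧ (fun j => s (Fin.natAdd n j)) ∈ Y}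

/-- The generalized projection `Pr_ι` of an `n`-ary relation. -/
def teamProj {A : Type w} {n m : ℕ} (ι : Fin m → Fin n) (X : Set (Fin n → A)) :
    Set (Fin m → A) :=
  (fun b => b ∘ ι) '' X

/-- The diagonal (identity) relation on `A`. -/
def diag (A : Type w) : Set (Fin 2 → A) := {s | s 0 = s 1}

/-- The interpretation of a relation symbol, as a set of tuples. -/
def relSet (L : FirstOrder.Language.{u, v}) (A : Type w) [L.Structure A] {n : ℕ} (R : L.Relations n) :
    Set (Fin n → A) :=
  {s | Structure.RelMap R s}

/-- The graph of the interpretation of a function symbol, as a set of tuples. -/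
def funGraph (L : FirstOrder.Language.{u, v}) (A : Type w) [L.Structure A] {n : ℕ} (F : L.Functions n) :
    Set (Fin (n + 1) → A) :=
  {s | Structure.funMap F (fun i => s i.castSucc) = s (Fin.last n)}

/-- A family of relations on `A` that is closed under the operations generating the
closure `cl`; a family `𝒴` satisfies `𝒴 = cl(𝒴)` precisely when it is closed. -/
structure IsClosedFamily (L : FirstOrder.Language.{u, v}) (A : Type w) [L.Structure A]
    (𝒴 : ∀ n : ℕ, Set (Set (Fin n → A))) : Prop where
  empty_mem : ∀ n, (∅ : Set (Fin n → A)) ∈ 𝒴 n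
  univ_mem : ∀ n, (Set.univ : Set (Fin n → A)) ∈ 𝒴 n
  inter_mem : ∀ (n : ℕ) (X Y : Set (Fin n → A)), X ∈ 𝒴 n → Y ∈ 𝒴 n → X ∩ Y ∈ 𝒴 n
  prod_mem : ∀ (n m : ℕ) (X : Set (Fin n → A)) (Y : Set (Fin m → A)),
    X ∈ 𝒴 n → Y ∈ 𝒴 m → teamProd X Y ∈ 𝒴 (n + m)
  proj_mem : ∀ (n m : ℕ) (ι : Fin m → Fin n) (X : Set (Fin n → A)),
    X ∈ 𝒴 n → teamProj ι X ∈ 𝒴 m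
  diag_mem : diag A ∈ 𝒴 2
  rel_mem : ∀ (n : ℕ) (R : L.Relations n), relSet L A R ∈ 𝒴 n
  graph_mem : ∀ (n : ℕ) (F : L.Functions n), funGraph L A F ∈ 𝒴 (n + 1)

/-- A partial team map from `A` to `B`.  Arities are preserved by typing; the domain
and the range are closed families (equivalently, `dom f = cl(dom f)` and
`ran f = cl(ran f)`); the empty relation of each arity is mapped to the empty relation
(in the untyped setting this is automatic for arity-preserving maps). -/
structure PartialTeamMap (L : FirstOrder.Language.{u, v}) (A : Type w) (B : Type x)
    [L.Structure A] [L.Structure B] where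
  dom : ∀ n : ℕ, Set (Set (Fin n → A))
  toFun : ∀ n : ℕ, Set (Fin n → A) → Set (Fin n → B)
  dom_closed : IsClosedFamily L A dom
  ran_closed : IsClosedFamily L B fun n => toFun n '' dom n
  map_empty : ∀ n, toFun n (∅ : Set (Fin n → A)) = ∅

namespace PartialTeamMap

variable {L : FirstOrder.Language.{u, v}} {A : Type w} {B : Type x} [L.Structure A] [L.Structure B]

/-- The range family of a partial team map. -/
def ran (f : PartialTeamMap L A B) : ∀ n : ℕ, Set (Set (Fin n → B)) :=
  fun n => f.toFun n '' f.dom n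

/-- Conditions (PI1)–(PI6): `f` is a partial team isomorphism. -/
structure IsIso (f : PartialTeamMap L A B) : Prop where
  empty_iff : ∀ (n : ℕ) (X : Set (Fin n → A)), X ∈ f.dom n → (X = ∅ ↔ f.toFun n X = ∅)
  univ_iff : ∀ (n : ℕ) (X : Set (Fin n → A)), X ∈ f.dom n →
    (X = Set.univ ↔ f.toFun n X = Set.univ)
  singleton_iff : ∀ (n : ℕ) (X : Set (Fin n → A)), X ∈ f.dom n →
    ((∃ s, X = {s}) ↔ ∃ t, f.toFun n X = {t})
  map_prod : ∀ (n m : ℕ) (X : Set (Fin n → A)) (Y : Set (Fin m → A)),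
    X ∈ f.dom n → Y ∈ f.dom m →
    f.toFun (n + m) (teamProd X Y) = teamProd (f.toFun n X) (f.toFun m Y)
  map_proj : ∀ (n m : ℕ) (ι : Fin m → Fin n) (X : Set (Fin n → A)), X ∈ f.dom n →
    f.toFun m (teamProj ι X) = teamProj ι (f.toFun n X)
  subset_iff : ∀ (n : ℕ) (X Y : Set (Fin n → A)), X ∈ f.dom n → Y ∈ f.dom n →
    (X ⊆ Y ↔ f.toFun n X ⊆ f.toFun n Y)
  map_diag : f.toFun 2 (diag A) = diag B
  map_rel : ∀ (n : ℕ) (R : L.Relations n), f.toFun n (relSet L A R) = relSet L B R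
  map_graph : ∀ (n : ℕ) (F : L.Functions n), f.toFun (n + 1) (funGraph L A F) = funGraph L B F

/-- `f` is a partial elementary team map: it preserves (in both directions) all
first-order sentences over `L` augmented by fresh relation symbols interpreted by
nonempty relations from the domain of `f`. -/
def IsElementary (f : PartialTeamMap L A B) : Prop :=
  ∀ (k : ℕ) (ar : Fin k → ℕ) (φ : (L.sum (relLang k ar)).Sentence)
    (X : ∀ i : Fin k, Set (Fin (ar i) → A)),
    (∀ i, X i ∈ f.dom (ar i)) → (∀ i, (X i).Nonempty) →
    (RealizeWith A φ X ↔ RealizeWith B φ fun i => f.toFun (ar i) (X i))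

/-- `f` is total: its domain consists of all relations on `A`. -/
def Total (f : PartialTeamMap L A B) : Prop := ∀ n, f.dom n = Set.univ

/-- Every singleton `{a}`, `a : A`, of arity 1 is in the domain of `f`. -/
def ElementTotal (f : PartialTeamMap L A B) : Prop :=
  ∀ a : A, ({fun _ => a} : Set (Fin 1 → A)) ∈ f.dom 1

/-- Every singleton `{b}`, `b : B`, of arity 1 is in the range of `f`. -/
def ElementSurjective (f : PartialTeamMap L A B) : Prop :=
  ∀ b : B, ({fun _ => b} : Set (Fin 1 → B)) ∈ f.ran 1

end PartialTeamMap

end TeamSem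

namespace TeamSem

open FirstOrder Language Set Structure

section Push

variable {α : Type*} {β : Type*}

/-- Pushforward of a relation along a map of elements. -/
def pushTup (e : α → β) {n : ℕ} (X : Set (Fin n → α)) : Set (Fin n → β) :=
  (fun a => fun i => e (a i)) '' X

lemma mem_pushTup_equiv (e : α ≃ β) {n : ℕ} {X : Set (Fin n → α)} {s : Fin n → β} :
    s ∈ pushTup e X ↔ (fun i => e.symm (s i)) ∈ X := by
  constructor
  · rintro ⟨a, ha, rfl⟩
    simpa using ha
  · intro h
    exact ⟨fun i => e.symm (s i), h, by funext i; simp⟩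

lemma pushTup_pushTup_symm (e : α ≃ β) {n : ℕ} (Y : Set (Fin n → β)) :
    pushTup e (pushTup e.symm Y) = Y := by
  ext s
  rw [mem_pushTup_equiv, mem_pushTup_equiv]
  simp

lemma pushTup_symm_pushTup (e : α ≃ β) {n : ℕ} (X : Set (Fin n → α)) :
    pushTup e.symm (pushTup e X) = X := by
  simpa using pushTup_pushTup_symm e.symm X

lemma pushTup_injective (e : α ≃ β) {n : ℕ} :
    Function.Injective (pushTup e : Set (Fin n → α) → Set (Fin n → β)) := by
  intro X Y h
  rw [← pushTup_symm_pushTup e X, h, pushTup_symm_pushTup]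

lemma pushTup_empty (e : α → β) {n : ℕ} : pushTup e (∅ : Set (Fin n → α)) = ∅ :=
  Set.image_empty _

lemma pushTup_univ (e : α ≃ β) {n : ℕ} : pushTup e (Set.univ : Set (Fin n → α)) = Set.univ := by
  ext s
  simp [mem_pushTup_equiv]

lemma pushTup_singleton (e : α → β) {n : ℕ} (u : Fin n → α) :
    pushTup e ({u} : Set (Fin n → α)) = {fun i => e (u i)} :=
  Set.image_singleton

lemma pushTup_subset_iff (e : α ≃ β) {n : ℕ} {X Y : Set (Fin n → α)} :
    X ⊆ Y ↔ pushTup e X ⊆ pushTup e Y := by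
  constructor
  · intro h s hs
    rw [mem_pushTup_equiv] at hs ⊢
    exact h hs
  · intro h s hs
    have : (fun i => e (s i)) ∈ pushTup e X := ⟨s, hs, rfl⟩
    have := h this
    rw [mem_pushTup_equiv] at this
    simpa using this

lemma pushTup_prod (e : α → β) {n m : ℕ} (X : Set (Fin n → α)) (Y : Set (Fin m → α)) :
    pushTup e (teamProd X Y) = teamProd (pushTup e X) (pushTup e Y) := by
  ext s
  constructor
  · rintro ⟨a, ⟨h1, h2⟩, rfl⟩
    exact ⟨⟨_, h1, rfl⟩, ⟨_, h2, rfl⟩⟩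
  · rintro ⟨⟨a, ha, h1⟩, ⟨b, hb, h2⟩⟩
    refine ⟨fun i => Fin.addCases a b i, ⟨?_, ?_⟩, ?_⟩
    · simpa [Fin.addCases_left] using ha
    · simpa [Fin.addCases_right] using hb
    · funext i
      refine Fin.addCases (fun j => ?_) (fun j => ?_) i
      · simp only [Fin.addCases_left]
        exact (congrFun h1 j)
      · simp only [Fin.addCases_right]
        exact (congrFun h2 j)

lemma pushTup_proj (e : α → β) {n m : ℕ} (ι : Fin m → Fin n) (X : Set (Fin n → α)) :
    pushTup e (teamProj ι X) = teamProj ι (pushTup e X) := by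
  unfold pushTup teamProj
  rw [Set.image_image, Set.image_image]
  rfl

lemma pushTup_nonempty (e : α → β) {n : ℕ} {X : Set (Fin n → α)} (h : X.Nonempty) :
    (pushTup e X).Nonempty :=
  h.image _

end Push

section Closed

variable {L : FirstOrder.Language.{u, v}} {M : Type*} [L.Structure M]

lemma isClosedFamily_univ : IsClosedFamily L M (fun n => (Set.univ : Set (Set (Fin n → M)))) := by
  constructor <;> intros <;> trivial

lemma IsClosedFamily.congr {𝒴 𝒵 : ∀ n : ℕ, Set (Set (Fin n → M))}
    (h : ∀ n, 𝒴 n = 𝒵 n) (hcl : IsClosedFamily L M 𝒴) : IsClosedFamily L M 𝒵 := by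
  have : 𝒴 = 𝒵 := funext h
  exact this ▸ hcl

end Closed

end TeamSem

namespace TeamSem

open FirstOrder Language Set Structure

lemma teamProd_singleton {α : Type*} {n m : ℕ} (u : Fin n → α) (v : Fin m → α) :
    teamProd ({u} : Set (Fin n → α)) ({v} : Set (Fin m → α)) = {Fin.append u v} := by
  ext s
  simp only [teamProd, mem_setOf_eq, mem_singleton_iff]
  constructor
  · rintro ⟨h1, h2⟩
    funext i
    refine Fin.addCases (fun j => ?_) (fun j => ?_) i
    · rw [Fin.append_left]; exact congrFun h1 j
    · rw [Fin.append_right]; exact congrFun h2 j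
  · rintro rfl
    constructor <;> funext j <;> simp [Fin.append_left, Fin.append_right]

/-- Transfer of `RealizeWith` along an isomorphism of structures. -/
lemma realizeWith_equiv {L : FirstOrder.Language.{u, v}} {M : Type*} {N : Type*}
    [L.Structure M] [L.Structure N] (E : M ≃[L] N)
    {k : ℕ} {ar : Fin k → ℕ} (φ : (L.sum (relLang k ar)).Sentence)
    (Z : ∀ i, Set (Fin (ar i) → M)) :
    RealizeWith M φ Z ↔ RealizeWith N φ (fun i => pushTup E (Z i)) := by
  letI := relStructure Z
  letI := relStructure (fun i => pushTup (⇑E) (Z i))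
  let E' : M ≃[L.sum (relLang k ar)] N :=
    { toEquiv := E.toEquiv
      map_fun' := by
        rintro n (fL | fR) x
        · exact E.map_fun' fL x
        · exact fR.elim
      map_rel' := by
        rintro n (rL | rR) x
        · exact E.map_rel' rL x
        · show (fun j => E (x (Fin.cast rR.2 j))) ∈ pushTup (⇑E) (Z rR.1) ↔
            (fun j => x (Fin.cast rR.2 j)) ∈ Z rR.1
          rw [show (⇑E : M → N) = ⇑E.toEquiv from rfl, mem_pushTup_equiv E.toEquiv]
          simp }
  exact StrongHomClass.realize_sentence E' φ

/-- The sentence `∀ x⃗ (R₀(x⃗) → φ(x⃗))` over `L` with one fresh `n`-ary relation symbol. -/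
def senOf {L : FirstOrder.Language.{u, v}} {n : ℕ} (φ : L.Formula (Fin n)) :
    (L.sum (relLang 1 (fun _ => n))).Sentence :=
  ((Relations.boundedFormula
        (Sum.inr ⟨0, rfl⟩ : (L.sum (relLang 1 (fun _ => n))).Relations n)
        (fun i => Term.var (Sum.inr i))).imp
      (BoundedFormula.relabel (Sum.inr : Fin n → Empty ⊕ Fin n) (LHom.sumInl.onFormula φ))).alls

lemma realizeWith_senOf {L : FirstOrder.Language.{u, v}} {M : Type*} [L.Structure M]
    {n : ℕ} (φ : L.Formula (Fin n)) (b : Fin n → M) :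
    RealizeWith M (senOf φ) (fun _ : Fin 1 => ({b} : Set (Fin n → M))) ↔ φ.Realize b := by
  letI := relStructure (fun _ : Fin 1 => ({b} : Set (Fin n → M)))
  show (senOf φ).Realize M ↔ _
  rw [Sentence.Realize, senOf, BoundedFormula.realize_alls]
  have hatom : ∀ xs : Fin n → M,
      BoundedFormula.Realize
        ((Relations.boundedFormula
          (Sum.inr ⟨0, rfl⟩ : (L.sum (relLang 1 (fun _ => n))).Relations n)
          (fun i => Term.var (Sum.inr i))) : (L.sum (relLang 1 (fun _ => n))).BoundedFormula Empty n)
        default xs ↔ xs = b := by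
    intro xs
    exact Iff.rfl
  have hbody : ∀ xs : Fin n → M,
      BoundedFormula.Realize
        (BoundedFormula.relabel (Sum.inr : Fin n → Empty ⊕ Fin n)
          ((LHom.sumInl : L →ᴸ L.sum (relLang 1 (fun _ => n))).onFormula φ))
        default xs ↔ φ.Realize xs := by
    intro xs
    rw [BoundedFormula.realize_relabel]
    have e2 : (xs ∘ Fin.natAdd n : Fin 0 → M) = default := funext fun i => i.elim0
    rw [e2]
    show ((LHom.sumInl : L →ᴸ L.sum (relLang 1 (fun _ => n))).onFormula φ).Realize _ ↔ _
    rw [LHom.realize_onFormula]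
    rfl
  constructor
  · intro h
    have h1 := h b
    rw [BoundedFormula.realize_imp] at h1
    exact (hbody b).mp (h1 ((hatom b).mpr rfl))
  · intro h xs
    rw [BoundedFormula.realize_imp]
    intro hx
    exact (hbody xs).mpr ((hatom xs).mp hx ▸ h)

end TeamSem

namespace TeamSem

open FirstOrder Language Set Structure

variable {L : FirstOrder.Language.{u, v}} {A : Type w} {C : Type x}
  [L.Structure A] [L.Structure C]

lemma map_singleton_one (f : PartialTeamMap L A C) (fel : A → C)
    (hfel : ∀ a : A, f.toFun 1 {fun _ => a} = ({fun _ => fel a} : Set (Fin 1 → C)))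
    (v : Fin 1 → A) : f.toFun 1 {v} = {fun i => fel (v i)} := by
  have hv : v = fun _ : Fin 1 => v 0 := funext fun i => by rw [Subsingleton.elim i (0 : Fin 1)]
  rw [hv, hfel]

lemma map_singleton (f : PartialTeamMap L A C) (hTot : f.Total) (hIso : f.IsIso)
    (fel : A → C)
    (hfel : ∀ a : A, f.toFun 1 {fun _ => a} = ({fun _ => fel a} : Set (Fin 1 → C)))
    (n : ℕ) : ∀ s : Fin n → A, f.toFun n {s} = {fun i => fel (s i)} := by
  have hd : ∀ {m : ℕ} (Y : Set (Fin m → A)), Y ∈ f.dom m := fun {m} Y => by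
    rw [hTot m]; trivial
  induction n with
  | zero =>
    intro s
    have h1 : ({s} : Set (Fin 0 → A)) = Set.univ := by
      ext t; simp [funext_iff, mem_singleton_iff]
    have h2 : ({fun i => fel (s i)} : Set (Fin 0 → C)) = Set.univ := by
      ext t; simp [funext_iff, mem_singleton_iff]
    rw [h1, h2]
    exact (hIso.univ_iff 0 Set.univ (hd _)).mp rfl
  | succ n ih =>
    intro s
    set u : Fin n → A := fun i => s (Fin.castAdd 1 i) with hu
    set v : Fin 1 → A := fun i => s (Fin.natAdd n i) with hvv
    have hs : s = Fin.append u v := by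
      funext i
      refine Fin.addCases (fun j => ?_) (fun j => ?_) i
      · rw [Fin.append_left]
      · rw [Fin.append_right]
    have happ : (fun i => fel (Fin.append u v i)) =
        Fin.append (fun i => fel (u i)) (fun i => fel (v i)) := by
      funext i
      refine Fin.addCases (fun j => ?_) (fun j => ?_) i <;>
        simp [Fin.append_left, Fin.append_right]
    rw [hs, happ, ← teamProd_singleton, hIso.map_prod _ _ _ _ (hd _) (hd _), ih u,
      map_singleton_one f fel hfel v, teamProd_singleton]

lemma mem_iff (f : PartialTeamMap L A C) (hTot : f.Total) (hIso : f.IsIso)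
    (fel : A → C)
    (hfel : ∀ a : A, f.toFun 1 {fun _ => a} = ({fun _ => fel a} : Set (Fin 1 → C)))
    {n : ℕ} (X : Set (Fin n → A)) (s : Fin n → A) :
    s ∈ X ↔ (fun i => fel (s i)) ∈ f.toFun n X := by
  have hd : ∀ {m : ℕ} (Y : Set (Fin m → A)), Y ∈ f.dom m := fun {m} Y => by
    rw [hTot m]; trivial
  constructor
  · intro hs
    have h2 := (hIso.subset_iff n {s} X (hd _) (hd _)).mp (singleton_subset_iff.mpr hs)
    rw [map_singleton f hTot hIso fel hfel n s] at h2
    exact h2 rfl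
  · intro hs
    have h2 : f.toFun n {s} ⊆ f.toFun n X := by
      rw [map_singleton f hTot hIso fel hfel n s]
      exact singleton_subset_iff.mpr hs
    exact (hIso.subset_iff n {s} X (hd _) (hd _)).mpr h2 rfl

end TeamSem

set_option maxHeartbeats 1000000

namespace TeamSem

/-- **From a team embedding to a substructure.**
Given a team embedding `f : 𝔄 → ℭ` with induced element map `fel` (so that
`f({a}) = {fel a}`), the set `B = range fel` carries a substructure `S` of `ℭ` whose
interpretations are the ones induced by `f` (`R^𝔅 = f(R^𝔄) ∩ Bⁿ` and
`graph F^𝔅 = f(graph F^𝔄) ∩ B^{n+1}`); the map `g(X) = f(X) ∩ Bⁿ` is a team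
isomorphism `𝔄 → 𝔅`; and if `f` is elementary then `f ∘ g⁻¹` is a partial elementary
team map and `𝔅` is an elementary substructure of `ℭ`. -/
theorem teamEmbedding_substructure
    {L : FirstOrder.Language.{u, v}} {A : Type w} {C : Type x}
    [L.Structure A] [L.Structure C]
    (f : PartialTeamMap L A C) (hTot : f.Total) (hIso : f.IsIso)
    (fel : A → C)
    (hfel : ∀ a : A, f.toFun 1 {fun _ => a} = ({fun _ => fel a} : Set (Fin 1 → C))) :
    ∃ S : L.Substructure C, (S : Set C) = Set.range fel ∧
      -- (i) the interpretations specified from `f` are exactly the induced ones,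
      --     so they are well defined and `𝔅` is a substructure of `ℭ`
      (∀ (n : ℕ) (R : L.Relations n) (s : Fin n → C), (∀ i, s i ∈ S) →
        (s ∈ f.toFun n (relSet L A R) ↔ s ∈ relSet L C R)) ∧
      (∀ (n : ℕ) (F : L.Functions n) (s : Fin (n + 1) → C), (∀ i, s i ∈ S) →
        (s ∈ f.toFun (n + 1) (funGraph L A F) ↔ s ∈ funGraph L C F)) ∧
      -- (ii) `g(X) = f(X) ∩ Bⁿ` is a team isomorphism `𝔄 → 𝔅`
      ∃ g : PartialTeamMap L A S, g.Total ∧ g.IsIso ∧ g.ElementSurjective ∧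
        (∀ (n : ℕ) (X : Set (Fin n → A)) (s : Fin n → S),
          s ∈ g.toFun n X ↔ (fun i => (s i : C)) ∈ f.toFun n X) ∧
        -- (iii) if `f` is elementary, `f ∘ g⁻¹` is a partial elementary team map
        --       with domain `ran g`, and `𝔅` is an elementary substructure of `ℭ`
        (f.IsElementary →
          S.IsElementary ∧
          ∃ h : PartialTeamMap L S C, h.IsElementary ∧ (∀ n, h.dom n = g.ran n) ∧
            ∀ (n : ℕ) (X : Set (Fin n → A)),
              h.toFun n (g.toFun n X) = f.toFun n X) := by
  classical
  have hd : ∀ {m : ℕ} (Y : Set (Fin m → A)), Y ∈ f.dom m := fun {m} Y => by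
    rw [hTot m]; trivial
  have hmem : ∀ {n : ℕ} (X : Set (Fin n → A)) (s : Fin n → A),
      s ∈ X ↔ (fun i => fel (s i)) ∈ f.toFun n X := fun {n} => mem_iff f hTot hIso fel hfel
  have hsing : ∀ {n : ℕ} (s : Fin n → A), f.toFun n {s} = {fun i => fel (s i)} :=
    fun {n} => map_singleton f hTot hIso fel hfel n
  -- `fel` is injective
  have hinj : Function.Injective fel := by
    intro a b hab
    have h1 : (fun _ : Fin 1 => a) ∈ ({fun _ => b} : Set (Fin 1 → A)) := by
      rw [hmem, hsing]
      exact mem_singleton_iff.mpr (funext fun _ => hab)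
    exact congrFun (mem_singleton_iff.mp h1) 0
  -- `fel` preserves functions
  have hfun : ∀ {n : ℕ} (F : L.Functions n) (s : Fin n → A),
      Structure.funMap F (fun i => fel (s i)) = fel (Structure.funMap F s) := by
    intro n F s
    have ht : Fin.snoc s (Structure.funMap F s) ∈ funGraph L A F := by
      simp [funGraph, Fin.snoc_castSucc, Fin.snoc_last]
    have h1 := (hmem (funGraph L A F) _).mp ht
    rw [hIso.map_graph] at h1
    simpa [funGraph, Fin.snoc_castSucc, Fin.snoc_last] using h1
  -- `fel` preserves and reflects relations
  have hrel : ∀ {n : ℕ} (R : L.Relations n) (s : Fin n → A),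
      Structure.RelMap R (fun i => fel (s i)) ↔ Structure.RelMap R s := by
    intro n R s
    have h1 := hmem (relSet L A R) s
    rw [hIso.map_rel] at h1
    exact h1.symm
  -- the embedding
  let emb : A ↪[L] C :=
    ⟨⟨fel, hinj⟩, fun {n} F x => (hfun F x).symm, fun {n} R x => hrel R x⟩
  refine ⟨emb.toHom.range, ?_, ?_, ?_, ?_⟩
  · rw [Hom.range_coe]; rfl
  · intro n R s _
    rw [hIso.map_rel]
  · intro n F s _
    rw [hIso.map_graph]
  -- part (ii)
  set S := emb.toHom.range with hS
  let ε : A ≃ ↥S := emb.equivRange.toEquiv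
  have hcoe : ∀ a : A, ((ε a : ↥S) : C) = fel a := fun a => rfl
  have hcoe_symm : ∀ b : ↥S, fel (ε.symm b) = (b : C) := fun b => by
    rw [← hcoe, Equiv.apply_symm_apply]
  let gfun : ∀ n : ℕ, Set (Fin n → A) → Set (Fin n → ↥S) := fun n X =>
    {s | (fun i => (s i : C)) ∈ f.toFun n X}
  have hg_eq : ∀ {n : ℕ} (X : Set (Fin n → A)), gfun n X = pushTup (⇑ε) X := by
    intro n X
    ext s
    show (fun i => (s i : C)) ∈ f.toFun n X ↔ _
    rw [mem_pushTup_equiv ε, hmem X (fun i => ε.symm (s i))]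
    have h1 : (fun i => fel (ε.symm (s i))) = fun i => (s i : C) :=
      funext fun i => hcoe_symm (s i)
    rw [h1]
  have hsurj : ∀ (n : ℕ) (Y : Set (Fin n → ↥S)), gfun n (pushTup (⇑ε.symm) Y) = Y := by
    intro n Y
    rw [hg_eq, pushTup_pushTup_symm]
  have hranuniv : ∀ n : ℕ, gfun n '' Set.univ = Set.univ := by
    intro n
    ext Y
    simp only [mem_univ, iff_true, mem_image]
    exact ⟨pushTup (⇑ε.symm) Y, trivial, hsurj n Y⟩
  let g : PartialTeamMap L A ↥S :=
    { dom := fun _ => Set.univ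
      toFun := gfun
      dom_closed := isClosedFamily_univ
      ran_closed := IsClosedFamily.congr (fun n => (hranuniv n).symm) isClosedFamily_univ
      map_empty := fun n => by
        rw [hg_eq, pushTup_empty] }
  refine ⟨g, fun n => rfl, ?_, ?_, fun n X s => Iff.rfl, ?_⟩
  · -- g is a partial team isomorphism
    constructor
    · intro n X _
      rw [show g.toFun n X = gfun n X from rfl, hg_eq]
      constructor
      · rintro rfl; exact pushTup_empty _
      · intro h
        rw [← pushTup_symm_pushTup ε X, h, pushTup_empty]
    · intro n X _
      rw [show g.toFun n X = gfun n X from rfl, hg_eq]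
      constructor
      · rintro rfl; exact pushTup_univ ε
      · intro h
        rw [← pushTup_symm_pushTup ε X, h]
        exact pushTup_univ ε.symm
    · intro n X _
      rw [show g.toFun n X = gfun n X from rfl, hg_eq]
      constructor
      · rintro ⟨s, rfl⟩
        exact ⟨fun i => ε (s i), pushTup_singleton (⇑ε) s⟩
      · rintro ⟨t, ht⟩
        refine ⟨fun i => ε.symm (t i), ?_⟩
        rw [← pushTup_symm_pushTup ε X, ht, pushTup_singleton]
    · intro n m X Y _ _
      show gfun (n + m) (teamProd X Y) = teamProd (gfun n X) (gfun m Y)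
      rw [hg_eq, hg_eq, hg_eq, pushTup_prod]
    · intro n m ι X _
      show gfun m (teamProj ι X) = teamProj ι (gfun n X)
      rw [hg_eq, hg_eq, pushTup_proj]
    · intro n X Y _ _
      show X ⊆ Y ↔ gfun n X ⊆ gfun n Y
      rw [hg_eq, hg_eq]
      exact pushTup_subset_iff ε
    · ext s
      show (fun i => (s i : C)) ∈ f.toFun 2 (diag A) ↔ s ∈ diag ↥S
      rw [hIso.map_diag]
      show ((s 0 : ↥S) : C) = ((s 1 : ↥S) : C) ↔ s 0 = s 1
      exact Subtype.coe_inj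
    · intro n R
      ext s
      show (fun i => (s i : C)) ∈ f.toFun n (relSet L A R) ↔ s ∈ relSet L ↥S R
      rw [hIso.map_rel]
      exact Iff.rfl
    · intro n F
      ext s
      show (fun i => (s i : C)) ∈ f.toFun (n + 1) (funGraph L A F) ↔ s ∈ funGraph L ↥S F
      rw [hIso.map_graph]
      show Structure.funMap F (fun i => ((s i.castSucc : ↥S) : C)) = ((s (Fin.last n) : ↥S) : C)
        ↔ Structure.funMap F (fun i => s i.castSucc) = s (Fin.last n)
      rw [← Subtype.coe_inj]
      exact Iff.rfl
  · -- g is element-surjective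
    intro b
    refine ⟨{fun _ => ε.symm b}, trivial, ?_⟩
    show gfun 1 {fun _ => ε.symm b} = {fun _ => b}
    rw [hg_eq, pushTup_singleton]
    congr 1
    funext i
    exact ε.apply_symm_apply b
  · -- part (iii)
    intro helem
    have hfelElem : ∀ {n : ℕ} (φ : L.Formula (Fin n)) (a : Fin n → A),
        φ.Realize a ↔ φ.Realize (fun i => fel (a i)) := by
      intro n φ a
      have h := helem 1 (fun _ => n) (senOf φ) (fun _ => {a}) (fun _ => hd _)
        (fun _ => ⟨a, rfl⟩)
      rw [realizeWith_senOf] at h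
      simp only [hsing] at h
      rw [realizeWith_senOf] at h
      exact h
    constructor
    · -- S is an elementary substructure
      intro n φ x
      have h2 : (((↑) : ↥S → C) ∘ x : Fin n → C) = fun i => fel (ε.symm (x i)) :=
        funext fun i => (hcoe_symm (x i)).symm
      have h3 := StrongHomClass.realize_formula emb.equivRange (φ := φ)
        (v := fun i => ε.symm (x i))
      have h4 : (⇑emb.equivRange ∘ fun i => ε.symm (x i)) = x :=
        funext fun i => ε.apply_symm_apply (x i)
      rw [h4] at h3
      rw [h2, ← hfelElem φ (fun i => ε.symm (x i)), h3]
    · -- the map h = f ∘ g⁻¹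
      have hdomS : ∀ n : ℕ, g.ran n = Set.univ := by
        intro n
        show gfun n '' Set.univ = Set.univ
        exact hranuniv n
      have hranlem : ∀ n : ℕ,
          (fun Y => f.toFun n (pushTup (⇑ε.symm) Y)) '' g.ran n = f.toFun n '' f.dom n := by
        intro n
        ext Z
        constructor
        · rintro ⟨Y, _, rfl⟩
          exact ⟨pushTup (⇑ε.symm) Y, hd _, rfl⟩
        · rintro ⟨X, _, rfl⟩
          refine ⟨gfun n X, by rw [hdomS n]; trivial, ?_⟩
          show f.toFun n (pushTup (⇑ε.symm) (gfun n X)) = f.toFun n X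
          rw [hg_eq, pushTup_symm_pushTup]
      let hm : PartialTeamMap L ↥S C :=
        { dom := g.ran
          toFun := fun n Y => f.toFun n (pushTup (⇑ε.symm) Y)
          dom_closed := IsClosedFamily.congr (fun n => (hdomS n).symm) isClosedFamily_univ
          ran_closed := IsClosedFamily.congr (fun n => (hranlem n).symm) f.ran_closed
          map_empty := fun n => by
            show f.toFun n (pushTup (⇑ε.symm) (∅ : Set (Fin n → ↥S))) = ∅
            rw [pushTup_empty, f.map_empty n] }
      refine ⟨hm, ?_, fun n => rfl, ?_⟩
      · -- hm is elementary
        intro k ar φ X hX hne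
        have h1 := realizeWith_equiv emb.equivRange φ (fun i => pushTup (⇑ε.symm) (X i))
        have hXY : (fun i => pushTup (⇑emb.equivRange) (pushTup (⇑ε.symm) (X i))) = X := by
          funext i
          exact pushTup_pushTup_symm ε (X i)
        rw [hXY] at h1
        have h2 := helem k ar φ (fun i => pushTup (⇑ε.symm) (X i)) (fun i => hd _)
          (fun i => (hne i).image _)
        exact h1.symm.trans h2
      · intro n X
        show f.toFun n (pushTup (⇑ε.symm) (gfun n X)) = f.toFun n X
        rw [hg_eq, pushTup_symm_pushTup]


end TeamSem
end

section
/- For every τ-structure 𝔄 and every set 𝒳 ⊆ R(𝔄) of relations on 𝔄, there exist a τ-structure 𝔅 of cardinality at most |𝒳| + |τ| + ℵ₀ and an element-total partial elementary team map ι: 𝔅 → 𝔄 ({b} ∈ dom(ι) for every b ∈ B) such that 𝒳 ⊆ ran(ι) and 𝔅 satisfies every existential second-order (ESO) sentence over τ that 𝔄 satisfies. -/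
open FirstOrder Language Set

universe u v w x

namespace TeamSem

section AuxConstruction
open Cardinal

variable {L : FirstOrder.Language.{u, u}} {A : Type u} [L.Structure A]

/-- Inductive closure predicate generating `cl`. -/
inductive Cl (G : ∀ n : ℕ, Set (Set (Fin n → A))) : ∀ n : ℕ, Set (Fin n → A) → Prop
  | base {n X} : X ∈ G n → Cl G n X
  | empty (n) : Cl G n ∅
  | univ (n) : Cl G n Set.univ
  | inter {n X Y} : Cl G n X → Cl G n Y → Cl G n (X ∩ Y)
  | prod {n m X Y} : Cl G n X → Cl G m Y → Cl G (n + m) (teamProd X Y)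
  | proj {n m} (ι : Fin m → Fin n) {X} : Cl G n X → Cl G m (teamProj ι X)
  | diag : Cl G 2 (diag A)
  | rel {n} (R : L.Relations n) : Cl G n (relSet L A R)
  | graph {n} (F : L.Functions n) : Cl G (n + 1) (funGraph L A F)

theorem Cl.mono {G G' : ∀ n : ℕ, Set (Set (Fin n → A))} (hGG : ∀ n, G n ⊆ G' n) :
    ∀ {n X}, Cl (L := L) G n X → Cl (L := L) G' n X := by
  intro n X h
  induction h with
  | base h => exact .base (hGG _ h)
  | empty n => exact .empty n
  | univ n => exact .univ n
  | inter _ _ ih1 ih2 => exact .inter ih1 ih2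
  | prod _ _ ih1 ih2 => exact .prod ih1 ih2
  | proj ι _ ih => exact .proj ι ih
  | diag => exact .diag
  | rel R => exact .rel R
  | graph F => exact .graph F

/-- One step of the closure iteration, on the sigma type of all relations. -/
private def interOp (p q : Σ n : ℕ, Set (Fin n → A)) : Σ n : ℕ, Set (Fin n → A) :=
  if h : q.1 = p.1 then ⟨p.1, p.2 ∩ (h ▸ q.2)⟩ else p

private def projOp (d : Σ n m : ℕ, Fin m → Fin n) (p : Σ n : ℕ, Set (Fin n → A)) :
    Σ n : ℕ, Set (Fin n → A) :=
  if h : p.1 = d.1 then ⟨d.2.1, teamProj d.2.2 (h ▸ p.2)⟩ else p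

private def clIter (L : FirstOrder.Language.{u, u}) [L.Structure A]
    (G : ∀ n : ℕ, Set (Set (Fin n → A))) : ℕ → Set (Σ n : ℕ, Set (Fin n → A))
  | 0 => {p | p.2 ∈ G p.1} ∪ ({p | p.2 = ∅} ∪ {p | p.2 = Set.univ} ∪ {⟨2, diag A⟩})
      ∪ (Set.range (fun R : Σ n, L.Relations n => ⟨R.1, relSet L A R.2⟩)
      ∪ Set.range (fun F : Σ n, L.Functions n => ⟨F.1 + 1, funGraph L A F.2⟩))
  | k + 1 => clIter L G k
      ∪ Set.image2 interOp (clIter L G k) (clIter L G k)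
      ∪ Set.image2 (fun p q => ⟨p.1 + q.1, teamProd p.2 q.2⟩) (clIter L G k) (clIter L G k)
      ∪ ⋃ (d : ULift.{u} (Σ n m : ℕ, Fin m → Fin n)), projOp d.down '' (clIter L G k)

private theorem interOp_eq {n : ℕ} (X Y : Set (Fin n → A)) :
    interOp ⟨n, X⟩ ⟨n, Y⟩ = ⟨n, X ∩ Y⟩ := by
  simp [interOp]

private theorem projOp_eq {n m : ℕ} (ι : Fin m → Fin n) (X : Set (Fin n → A)) :
    projOp ⟨n, m, ι⟩ ⟨n, X⟩ = ⟨m, teamProj ι X⟩ := by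
  simp [projOp]

private theorem clIter_subset_succ {G : ∀ n : ℕ, Set (Set (Fin n → A))} (k : ℕ) :
    clIter L G k ⊆ clIter L G (k + 1) := fun p hp => Or.inl (Or.inl (Or.inl hp))

private theorem clIter_mono {G : ∀ n : ℕ, Set (Set (Fin n → A))} {k l : ℕ} (h : k ≤ l) :
    clIter L G k ⊆ clIter L G l := by
  induction l with
  | zero => exact Nat.le_zero.1 h ▸ subset_rfl
  | succ l ih =>
    rcases Nat.lt_or_ge k (l + 1) with h' | h'
    · exact (ih (Nat.lt_succ_iff.1 h')).trans (clIter_subset_succ l)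
    · exact le_antisymm h h' ▸ subset_rfl

private theorem cl_subset_iUnion_clIter {G : ∀ n : ℕ, Set (Set (Fin n → A))} {n : ℕ}
    {X : Set (Fin n → A)} (h : Cl (L := L) G n X) :
    (⟨n, X⟩ : Σ n : ℕ, Set (Fin n → A)) ∈ ⋃ k, clIter L G k := by
  induction h with
  | @base n X h => exact Set.mem_iUnion.2 ⟨0, Or.inl (Or.inl h)⟩
  | empty n => exact Set.mem_iUnion.2 ⟨0, Or.inl (Or.inr (Or.inl (Or.inl rfl)))⟩
  | univ n => exact Set.mem_iUnion.2 ⟨0, Or.inl (Or.inr (Or.inl (Or.inr rfl)))⟩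
  | @inter n X Y _ _ ih1 ih2 =>
    obtain ⟨k1, h1⟩ := Set.mem_iUnion.1 ih1
    obtain ⟨k2, h2⟩ := Set.mem_iUnion.1 ih2
    refine Set.mem_iUnion.2 ⟨max k1 k2 + 1, Or.inl (Or.inl (Or.inr ?_))⟩
    exact ⟨_, clIter_mono (le_max_left k1 k2) h1, _, clIter_mono (le_max_right k1 k2) h2, interOp_eq X Y⟩
  | @prod n m X Y _ _ ih1 ih2 =>
    obtain ⟨k1, h1⟩ := Set.mem_iUnion.1 ih1
    obtain ⟨k2, h2⟩ := Set.mem_iUnion.1 ih2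
    refine Set.mem_iUnion.2 ⟨max k1 k2 + 1, Or.inl (Or.inr ?_)⟩
    exact ⟨_, clIter_mono (le_max_left k1 k2) h1, _, clIter_mono (le_max_right k1 k2) h2, rfl⟩
  | @proj n m ι X _ ih =>
    obtain ⟨k1, h1⟩ := Set.mem_iUnion.1 ih
    refine Set.mem_iUnion.2 ⟨k1 + 1, Or.inr (Set.mem_iUnion.2 ⟨ULift.up ⟨n, m, ι⟩, ⟨⟨n, X⟩, h1, projOp_eq ι X⟩⟩)⟩
  | diag => exact Set.mem_iUnion.2 ⟨0, Or.inl (Or.inr (Or.inr rfl))⟩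
  | rel R => exact Set.mem_iUnion.2 ⟨0, Or.inr (Or.inl ⟨⟨_, R⟩, rfl⟩)⟩
  | graph F => exact Set.mem_iUnion.2 ⟨0, Or.inr (Or.inr ⟨⟨_, F⟩, rfl⟩)⟩

private def sigmaSubtypeEquiv {T : ℕ → Type u} (Q : ∀ n, T n → Prop) :
    (Σ n, {x : T n // Q n x}) ≃ {p : Σ n, T n // Q p.1 p.2} where
  toFun := fun x => ⟨⟨x.1, x.2.1⟩, x.2.2⟩
  invFun := fun p => ⟨p.1.1, p.1.2, p.2⟩
  left_inv := fun ⟨_, _, _⟩ => rfl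
  right_inv := fun ⟨⟨_, _⟩, _⟩ => rfl

private theorem mk_clIter_le {G : ∀ n : ℕ, Set (Set (Fin n → A))} {κ : Cardinal.{u}}
    (hκ : ℵ₀ ≤ κ) (hG : #(Σ n, ↥(G n)) ≤ κ) (hL : L.card ≤ κ) :
    ∀ k, #(clIter L G k) ≤ κ := by
  have hself : κ + κ ≤ κ := le_of_eq (Cardinal.add_eq_self hκ)
  have hrel : #(Σ n, L.Relations n) ≤ κ := by
    refine le_trans ?_ hL
    rw [Language.card, Language.Symbols, mk_sum]
    simpa using le_add_left _ _
  have hfun : #(Σ n, L.Functions n) ≤ κ := by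
    refine le_trans ?_ hL
    rw [Language.card, Language.Symbols, mk_sum]
    simpa using le_add_right _ _
  intro k
  induction k with
  | zero =>
    have h1 : #({p : Σ n : ℕ, Set (Fin n → A) | p.2 ∈ G p.1}) ≤ κ :=
      le_trans (le_of_eq (Cardinal.mk_congr (sigmaSubtypeEquiv (fun n X => X ∈ G n)).symm)) hG
    have hemp : Countable ({p : Σ n : ℕ, Set (Fin n → A) | p.2 = ∅}) := by
      refine ⟨⟨fun p => p.1.1, ?_⟩⟩
      rintro ⟨⟨n, X⟩, hX⟩ ⟨⟨m, Y⟩, hY⟩ h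
      simp only at h
      subst h
      exact Subtype.ext (congrArg (Sigma.mk n) ((show X = ∅ from hX).trans
        (show Y = ∅ from hY).symm))
    have huniv : Countable ({p : Σ n : ℕ, Set (Fin n → A) | p.2 = Set.univ}) := by
      refine ⟨⟨fun p => p.1.1, ?_⟩⟩
      rintro ⟨⟨n, X⟩, hX⟩ ⟨⟨m, Y⟩, hY⟩ h
      simp only at h
      subst h
      exact Subtype.ext (congrArg (Sigma.mk n) ((show X = Set.univ from hX).trans
        (show Y = Set.univ from hY).symm))
    have h2 : #({p : Σ n : ℕ, Set (Fin n → A) | p.2 = ∅} ∪ {p | p.2 = Set.univ} ∪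
        {(⟨2, diag A⟩ : Σ n : ℕ, Set (Fin n → A))} : Set _) ≤ κ := by
      refine le_trans (mk_union_le _ _) (le_trans (add_le_add (le_trans (mk_union_le _ _)
        (add_le_add Cardinal.mk_le_aleph0 Cardinal.mk_le_aleph0)) Cardinal.mk_le_aleph0) ?_)
      exact le_trans (add_le_add (le_trans (add_le_add hκ hκ) hself) hκ) hself
    have h3 : #(Set.range (fun R : Σ n, L.Relations n =>
        (⟨R.1, relSet L A R.2⟩ : Σ n : ℕ, Set (Fin n → A))) ∪
        Set.range (fun F : Σ n, L.Functions n =>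
        (⟨F.1 + 1, funGraph L A F.2⟩ : Σ n : ℕ, Set (Fin n → A))) : Set _) ≤ κ :=
      le_trans (mk_union_le _ _) (le_trans (add_le_add
        (le_trans Cardinal.mk_range_le hrel) (le_trans Cardinal.mk_range_le hfun)) hself)
    exact le_trans (mk_union_le _ _) (le_trans (add_le_add (le_trans (mk_union_le _ _)
      (le_trans (add_le_add h1 h2) hself)) h3) hself)
  | succ k ih =>
    have hd : #(ULift.{u} (Σ n m : ℕ, Fin m → Fin n)) ≤ ℵ₀ := Cardinal.mk_le_aleph0
    have hmul : κ * κ ≤ κ := le_of_eq (Cardinal.mul_eq_self hκ)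
    refine le_trans (mk_union_le _ _) (le_trans (add_le_add (le_trans (mk_union_le _ _)
      (le_trans (add_le_add (le_trans (mk_union_le _ _) (le_trans (add_le_add ih
        (le_trans Cardinal.mk_image2_le (le_trans (mul_le_mul' ih ih) hmul))) hself))
      (le_trans Cardinal.mk_image2_le (le_trans (mul_le_mul' ih ih) hmul))) hself)) ?_) hself)
    refine le_trans (Cardinal.mk_iUnion_le _) (le_trans (mul_le_mul' (le_trans hd hκ)
      (ciSup_le' fun d => le_trans Cardinal.mk_image_le ih)) hmul)

private theorem mk_cl_le {G : ∀ n : ℕ, Set (Set (Fin n → A))} {κ : Cardinal.{u}}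
    (hκ : ℵ₀ ≤ κ) (hG : #(Σ n, ↥(G n)) ≤ κ) (hL : L.card ≤ κ) :
    #(Σ n, {X : Set (Fin n → A) // Cl (L := L) G n X}) ≤ κ := by
  rw [Cardinal.mk_congr (sigmaSubtypeEquiv (fun n X => Cl (L := L) G n X))]
  have hsub : {p : Σ n : ℕ, Set (Fin n → A) | Cl (L := L) G p.1 p.2} ⊆
      ⋃ (k : ULift.{u} ℕ), clIter L G k.down := by
    rintro ⟨n, X⟩ hp
    obtain ⟨k, hk⟩ := Set.mem_iUnion.1 (cl_subset_iUnion_clIter hp)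
    exact Set.mem_iUnion.2 ⟨ULift.up k, hk⟩
  refine le_trans (Cardinal.mk_le_mk_of_subset hsub) ?_
  refine le_trans (Cardinal.mk_iUnion_le _) ?_
  refine le_trans (mul_le_mul' (le_trans Cardinal.mk_le_aleph0 hκ)
    (ciSup_le' fun k => mk_clIter_le hκ hG hL k.down)) ?_
  exact le_of_eq (Cardinal.mul_eq_self hκ)

variable (L)

/-- Generators: a fixed family `G0` together with singletons of elements of `s`. -/
def Gen (G0 : ∀ n : ℕ, Set (Set (Fin n → A))) (s : Set A) : ∀ n : ℕ, Set (Set (Fin n → A)) :=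
  fun n => G0 n ∪ {X | ∃ a ∈ s, X = ({fun _ => a} : Set (Fin n → A))}

theorem Gen_mono (G0 : ∀ n : ℕ, Set (Set (Fin n → A))) {s t : Set A} (h : s ⊆ t) :
    ∀ n, Gen G0 s n ⊆ Gen G0 t n := by
  rintro n X (hX | ⟨a, ha, rfl⟩)
  · exact Or.inl hX
  · exact Or.inr ⟨a, h ha, rfl⟩

variable (A) in
/-- The relational language with a symbol for each relation in the closure of
`Gen G0 s`. -/
def DLang (G0 : ∀ n : ℕ, Set (Set (Fin n → A))) (s : Set A) : FirstOrder.Language.{u, u} where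
  Functions := fun _ => PEmpty
  Relations := fun n => {X : Set (Fin n → A) // Cl (L := L) (Gen G0 s) n X}

variable (A) in
/-- The language `L` together with the closure symbols. -/
def FL (G0 : ∀ n : ℕ, Set (Set (Fin n → A))) (s : Set A) : FirstOrder.Language.{u, u} :=
  L.sum (DLang L A G0 s)

variable {G0 : ∀ n : ℕ, Set (Set (Fin n → A))} {s t u' : Set A}

instance dStructure : (DLang L A G0 s).Structure A where
  funMap := fun f _ => f.elim
  RelMap := fun R v => v ∈ R.1

instance fStructure : (FL L A G0 s).Structure A :=
  Language.sumStructure _ _ _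

/-- Language inclusion between stages. -/
noncomputable def dHom (h : s ⊆ t) : DLang L A G0 s →ᴸ DLang L A G0 t where
  onFunction := fun {n} f => f
  onRelation := fun {n} R => ⟨R.1, R.2.mono (Gen_mono G0 h)⟩

noncomputable def fHom (h : s ⊆ t) : FL L A G0 s →ᴸ FL L A G0 t :=
  (LHom.id L).sumMap (dHom L h)

theorem dHom_expansion (h : s ⊆ t) : (dHom L (G0 := G0) h).IsExpansionOn A :=
  ⟨fun f _ => f.elim, fun _ _ => rfl⟩

theorem fHom_expansion (h : s ⊆ t) : (fHom L (G0 := G0) h).IsExpansionOn A :=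
  letI := dHom_expansion L (G0 := G0) h
  LHom.sumMap_isExpansionOn _ _ A

/-- Cardinality of the stage languages. -/
theorem card_FL_le {κ : Cardinal.{u}} (hκ : ℵ₀ ≤ κ) (hG : #(Σ n, ↥(G0 n)) ≤ κ)
    (hL : L.card ≤ κ) (hs : #s ≤ κ) : (FL L A G0 s).card ≤ κ := by
  have hGen : #(Σ n, ↥(Gen G0 s n)) ≤ κ := by
    have h1 : ∀ n, Gen G0 s n ⊆ G0 n ∪ {X | ∃ a ∈ s, X = ({fun _ => a} : Set (Fin n → A))} :=
      fun n => subset_rfl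
    have key : #(Σ n, ↥(Gen G0 s n)) ≤
        #(Σ n, ↥(G0 n)) + #(Σ n : ℕ, ↥{X : Set (Fin n → A) | ∃ a ∈ s, X = {fun _ => a}}) := by
      rw [Cardinal.mk_sigma, Cardinal.mk_sigma, Cardinal.mk_sigma, ← Cardinal.sum_add_distrib]
      exact Cardinal.sum_le_sum _ _ fun n => Cardinal.mk_union_le _ _
    have hsing : #(Σ n : ℕ, ↥{X : Set (Fin n → A) | ∃ a ∈ s, X = {fun _ => a}}) ≤ κ := by
      rcases Set.eq_empty_or_nonempty s with rfl | ⟨a0, ha0⟩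
      · refine le_trans (le_of_eq (Cardinal.mk_eq_zero_iff.2 ?_)) (zero_le : (0 : Cardinal.{u}) ≤ κ)
        refine ⟨fun p => ?_⟩
        obtain ⟨_, _, ⟨_, h, _⟩⟩ := p
        exact absurd h (Set.notMem_empty _)
      · have hsurj : Function.Surjective (fun q : ULift.{u} ℕ × ↥s =>
            (⟨q.1.down, ⟨{fun _ => (q.2 : A)}, ⟨(q.2 : A), q.2.2, rfl⟩⟩⟩ :
              Σ n : ℕ, ↥{X : Set (Fin n → A) | ∃ a ∈ s, X = {fun _ => a}})) := by
          rintro ⟨n, X, a, ha, rfl⟩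
          exact ⟨⟨ULift.up n, ⟨a, ha⟩⟩, rfl⟩
        refine le_trans (Cardinal.mk_le_of_surjective hsurj) ?_
        rw [Cardinal.mk_prod]
        simp only [Cardinal.mk_uLift, Cardinal.mk_denumerable, Cardinal.lift_aleph0,
          Cardinal.lift_id]
        exact le_trans (mul_le_mul' hκ hs) (le_of_eq (Cardinal.mul_eq_self hκ))
    exact le_trans key (le_trans (add_le_add hG hsing) (le_of_eq (Cardinal.add_eq_self hκ)))
  have hD : (DLang L A G0 s).card ≤ κ := by
    rw [Language.card, Language.Symbols, mk_sum]
    have h1 : #(Σ l, (DLang L A G0 s).Functions l) = 0 := by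
      simp [DLang]
    have h2 : #(Σ l, (DLang L A G0 s).Relations l) ≤ κ := mk_cl_le hκ hGen hL
    simp only [Cardinal.lift_id]
    rw [h1]
    simpa using h2
  rw [FL, Language.card_sum]
  simp only [Cardinal.lift_id]
  exact le_trans (add_le_add hL hD) (le_of_eq (Cardinal.add_eq_self hκ))

section Chain

variable {κ : Cardinal.{u}}

theorem stage_exists (hκ : ℵ₀ ≤ κ) (hG : #(Σ n, ↥(G0 n)) ≤ κ) (hL : L.card ≤ κ)
    (s : Set A) (hs : #s ≤ κ) :
    ∃ S : (FL L A G0 s).ElementarySubstructure A, s ⊆ (S : Set A) ∧ #(S : Set A) ≤ κ := by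
  rcases le_or_gt κ #A with hA | hA
  · have : Nonempty A := by
      rw [← Cardinal.mk_ne_zero_iff]
      intro h0
      rw [h0] at hA
      exact absurd (le_antisymm (le_trans hκ hA) zero_le) Cardinal.aleph0_ne_zero
    obtain ⟨S, hsub, hcard⟩ := Language.exists_elementarySubstructure_card_eq
      (FL L A G0 s) s κ hκ (by simpa using hs)
      (by simpa using card_FL_le L hκ hG hL hs) (by simpa using hA)
    refine ⟨S, hsub, ?_⟩
    have := hcard
    simp only [Cardinal.lift_id] at this
    exact le_of_eq this
  · refine ⟨⊤, fun a _ => trivial, ?_⟩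
    have : #((⊤ : (FL L A G0 s).ElementarySubstructure A) : Set A) = #A := by
      rw [ElementarySubstructure.coe_top, Cardinal.mk_univ]
    rw [this]
    exact le_of_lt hA

variable (G0) (hκ : ℵ₀ ≤ κ) (hG : #(Σ n, ↥(G0 n)) ≤ κ) (hL : L.card ≤ κ)

/-- The chain of stage sets. -/
noncomputable def chainSet : ℕ → {s : Set A // #s ≤ κ}
  | 0 => ⟨∅, by simp⟩
  | k + 1 =>
    ⟨((Classical.choose (stage_exists L hκ hG hL (chainSet k).1 (chainSet k).2) :
        (FL L A G0 (chainSet k).1).ElementarySubstructure A) : Set A),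
      (Classical.choose_spec (stage_exists L hκ hG hL (chainSet k).1 (chainSet k).2)).2⟩

/-- The elementary substructure at each stage. -/
noncomputable def stageES (k : ℕ) :
    (FL L A G0 (chainSet L G0 hκ hG hL k).1).ElementarySubstructure A :=
  Classical.choose (stage_exists L hκ hG hL (chainSet L G0 hκ hG hL k).1
    (chainSet L G0 hκ hG hL k).2)

theorem chainSet_succ (k : ℕ) :
    (chainSet L G0 hκ hG hL (k + 1)).1 = ((stageES L G0 hκ hG hL k : Set A)) := rfl

theorem chainSet_subset_succ (k : ℕ) :
    (chainSet L G0 hκ hG hL k).1 ⊆ (chainSet L G0 hκ hG hL (k + 1)).1 :=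
  (Classical.choose_spec (stage_exists L hκ hG hL (chainSet L G0 hκ hG hL k).1
    (chainSet L G0 hκ hG hL k).2)).1

theorem chainSet_mono {k l : ℕ} (h : k ≤ l) :
    (chainSet L G0 hκ hG hL k).1 ⊆ (chainSet L G0 hκ hG hL l).1 := by
  induction l with
  | zero => exact Nat.le_zero.1 h ▸ subset_rfl
  | succ l ih =>
    rcases Nat.lt_or_ge k (l + 1) with h' | h'
    · exact (ih (Nat.lt_succ_iff.1 h')).trans (chainSet_subset_succ L G0 hκ hG hL l)
    · exact le_antisymm h h' ▸ subset_rfl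

/-- The union of the chain. -/
def bigSet : Set A := ⋃ k, (chainSet L G0 hκ hG hL k).1

theorem chainSet_subset_bigSet (k : ℕ) :
    (chainSet L G0 hκ hG hL k).1 ⊆ bigSet L G0 hκ hG hL :=
  Set.subset_iUnion (fun k => (chainSet L G0 hκ hG hL k).1) k

theorem mk_bigSet_le : #(bigSet L G0 hκ hG hL) ≤ κ := by
  have : bigSet L G0 hκ hG hL = ⋃ k : ULift.{u} ℕ, (chainSet L G0 hκ hG hL k.down).1 := by
    ext a
    simp only [bigSet, Set.mem_iUnion]
    exact ⟨fun ⟨k, h⟩ => ⟨ULift.up k, h⟩, fun ⟨k, h⟩ => ⟨k.down, h⟩⟩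
  rw [this]
  refine le_trans (Cardinal.mk_iUnion_le _) (le_trans (mul_le_mul'
    (le_trans Cardinal.mk_le_aleph0 hκ) (ciSup_le' fun k => (chainSet L G0 hκ hG hL k.down).2))
    (le_of_eq (Cardinal.mul_eq_self hκ)))

theorem exists_chain_level {n : ℕ} (x : Fin n → A)
    (hx : ∀ i, x i ∈ bigSet L G0 hκ hG hL) : ∃ l, ∀ i, x i ∈ (chainSet L G0 hκ hG hL l).1 := by
  have h : ∀ i, ∃ k, x i ∈ (chainSet L G0 hκ hG hL k).1 := fun i => Set.mem_iUnion.1 (hx i)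
  choose g hg using h
  exact ⟨Finset.univ.sup g, fun i => chainSet_mono L G0 hκ hG hL
    (Finset.le_sup (Finset.mem_univ i)) (hg i)⟩

/-- The union as a substructure in the limit language. -/
noncomputable def bigSub : (FL L A G0 (bigSet L G0 hκ hG hL)).Substructure A where
  carrier := bigSet L G0 hκ hG hL
  fun_mem := by
    intro n f x hx
    rcases f with f | f
    · obtain ⟨l, hl⟩ := exists_chain_level L G0 hκ hG hL x hx
      have hmem : ∀ i, x i ∈ ((stageES L G0 hκ hG hL l : Set A)) := fun i =>
        chainSet_subset_succ L G0 hκ hG hL l (hl i)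
      have : Structure.funMap (L := FL L A G0 (chainSet L G0 hκ hG hL l).1) (M := A)
          (Sum.inl f) x ∈ ((stageES L G0 hκ hG hL l) : (FL L A G0
            (chainSet L G0 hκ hG hL l).1).Substructure A) :=
        Substructure.fun_mem _ (Sum.inl f) x hmem
      exact chainSet_subset_bigSet L G0 hκ hG hL (l + 1) this
    · exact f.elim

end Chain

section BigElementary

variable {κ : Cardinal.{u}}
variable (G0 : ∀ n : ℕ, Set (Set (Fin n → A)))
variable (hκ : ℵ₀ ≤ κ) (hG : #(Σ n, ↥(G0 n)) ≤ κ) (hL : L.card ≤ κ)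

theorem cl_directed {n : ℕ} {X : Set (Fin n → A)}
    (h : Cl (L := L) (Gen G0 (bigSet L G0 hκ hG hL)) n X) :
    ∃ k, Cl (L := L) (Gen G0 (chainSet L G0 hκ hG hL k).1) n X := by
  induction h with
  | base h =>
    rcases h with h | ⟨a, ha, rfl⟩
    · exact ⟨0, .base (Or.inl h)⟩
    · obtain ⟨k, hk⟩ := Set.mem_iUnion.1 ha
      exact ⟨k, .base (Or.inr ⟨a, hk, rfl⟩)⟩
  | empty n => exact ⟨0, .empty n⟩
  | univ n => exact ⟨0, .univ n⟩
  | inter _ _ ih1 ih2 =>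
    obtain ⟨k1, h1⟩ := ih1; obtain ⟨k2, h2⟩ := ih2
    exact ⟨max k1 k2, .inter
      (h1.mono (Gen_mono G0 (chainSet_mono L G0 hκ hG hL (le_max_left k1 k2))))
      (h2.mono (Gen_mono G0 (chainSet_mono L G0 hκ hG hL (le_max_right k1 k2))))⟩
  | prod _ _ ih1 ih2 =>
    obtain ⟨k1, h1⟩ := ih1; obtain ⟨k2, h2⟩ := ih2
    exact ⟨max k1 k2, .prod
      (h1.mono (Gen_mono G0 (chainSet_mono L G0 hκ hG hL (le_max_left k1 k2))))
      (h2.mono (Gen_mono G0 (chainSet_mono L G0 hκ hG hL (le_max_right k1 k2))))⟩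
  | proj ι _ ih =>
    obtain ⟨k, h⟩ := ih
    exact ⟨k, .proj ι h⟩
  | diag => exact ⟨0, .diag⟩
  | rel R => exact ⟨0, .rel R⟩
  | graph F => exact ⟨0, .graph F⟩

theorem exists_stage_term {γ : Type*} (l : ℕ)
    (t : (FL L A G0 (bigSet L G0 hκ hG hL)).Term γ) :
    ∃ t₀ : (FL L A G0 (chainSet L G0 hκ hG hL l).1).Term γ,
      (fHom L (G0 := G0) (chainSet_subset_bigSet L G0 hκ hG hL l)).onTerm t₀ = t := by
  induction t with
  | var v => exact ⟨Term.var v, rfl⟩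
  | func f ts ih =>
    rcases f with f | f
    · choose ts₀ hts₀ using ih
      refine ⟨Term.func (Sum.inl f) ts₀, ?_⟩
      simp only [LHom.onTerm]
      exact congrArg (Term.func (Sum.inl f)) (funext hts₀)
    · exact f.elim

theorem exists_stage_formula {r : ℕ}
    (φ : (FL L A G0 (bigSet L G0 hκ hG hL)).BoundedFormula Empty r) :
    ∃ k, ∀ l, k ≤ l → ∃ φ₀ : (FL L A G0 (chainSet L G0 hκ hG hL l).1).BoundedFormula Empty r,
      (fHom L (G0 := G0) (chainSet_subset_bigSet L G0 hκ hG hL l)).onBoundedFormula φ₀ = φ := by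
  induction φ with
  | falsum => exact ⟨0, fun l _ => ⟨BoundedFormula.falsum, rfl⟩⟩
  | equal t₁ t₂ =>
    refine ⟨0, fun l _ => ?_⟩
    obtain ⟨t₁₀, h₁⟩ := exists_stage_term L G0 hκ hG hL l t₁
    obtain ⟨t₂₀, h₂⟩ := exists_stage_term L G0 hκ hG hL l t₂
    exact ⟨BoundedFormula.equal t₁₀ t₂₀, by
      simp only [LHom.onBoundedFormula, Term.bdEqual, h₁, h₂]⟩
  | @rel r n R ts =>
    rcases R with R | R
    · refine ⟨0, fun l _ => ?_⟩
      choose ts₀ hts₀ using fun i => exists_stage_term L G0 hκ hG hL l (ts i)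
      refine ⟨BoundedFormula.rel (Sum.inl R) ts₀, ?_⟩
      simp only [LHom.onBoundedFormula, Relations.boundedFormula]
      exact congrArg (BoundedFormula.rel (Sum.inl R)) (funext hts₀)
    · obtain ⟨Y, hY⟩ := R
      obtain ⟨k, hk⟩ := cl_directed L G0 hκ hG hL hY
      refine ⟨k, fun l hl => ?_⟩
      choose ts₀ hts₀ using fun i => exists_stage_term L G0 hκ hG hL l (ts i)
      refine ⟨BoundedFormula.rel (Sum.inr ⟨Y, hk.mono
        (Gen_mono G0 (chainSet_mono L G0 hκ hG hL hl))⟩) ts₀, ?_⟩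
      simp only [LHom.onBoundedFormula, Relations.boundedFormula]
      exact congrArg (BoundedFormula.rel (Sum.inr ⟨Y, hY⟩)) (funext hts₀)
  | imp φ₁ φ₂ ih₁ ih₂ =>
    obtain ⟨k1, h1⟩ := ih₁; obtain ⟨k2, h2⟩ := ih₂
    refine ⟨max k1 k2, fun l hl => ?_⟩
    obtain ⟨φ₁₀, hφ₁⟩ := h1 l (le_trans (le_max_left k1 k2) hl)
    obtain ⟨φ₂₀, hφ₂⟩ := h2 l (le_trans (le_max_right k1 k2) hl)
    exact ⟨φ₁₀.imp φ₂₀, by simp only [LHom.onBoundedFormula, hφ₁, hφ₂]⟩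
  | all φ ih =>
    obtain ⟨k, h⟩ := ih
    refine ⟨k, fun l hl => ?_⟩
    obtain ⟨φ₀, hφ⟩ := h l hl
    exact ⟨φ₀.all, by simp only [LHom.onBoundedFormula, hφ]⟩

theorem bigSub_isElementary : (bigSub L G0 hκ hG hL).IsElementary := by
  apply Substructure.isElementary_of_exists
  intro n φ x a hr
  obtain ⟨k, hk⟩ := exists_stage_formula L G0 hκ hG hL φ
  obtain ⟨l₀, hl₀⟩ := exists_chain_level L G0 hκ hG hL (fun i => (x i : A)) (fun i => (x i).2)
  set l := max k l₀ with hldef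
  obtain ⟨φ₀, hφ₀⟩ := hk l (le_max_left k l₀)
  haveI := fHom_expansion L (G0 := G0) (chainSet_subset_bigSet L G0 hκ hG hL l)
  rw [← hφ₀, LHom.realize_onBoundedFormula] at hr
  set ES := stageES L G0 hκ hG hL l with hES
  have hxES : ∀ i, (x i : A) ∈ (ES : Set A) := fun i =>
    chainSet_subset_succ L G0 hκ hG hL l
      (chainSet_mono L G0 hκ hG hL (le_max_right k l₀) (hl₀ i))
  set x' : Fin n → ↥ES := fun i => (⟨(x i : A), hxES i⟩ : ↥ES) with hx'
  have hcoe : ((↑) : ↥ES → A) ∘ x' = fun i => (x i : A) := funext fun i => rfl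
  have hex : (φ₀.ex).Realize (default : Empty → A) (((↑) : ↥ES → A) ∘ x') := by
    rw [BoundedFormula.realize_ex]
    exact ⟨a, by rw [hcoe]; exact hr⟩
  have htrans := ES.subtype.map_boundedFormula (φ₀.ex) (default : Empty → ↥ES) x'
  rw [Unique.eq_default (⇑ES.subtype ∘ (default : Empty → ↥ES))] at htrans
  have hexS : (φ₀.ex).Realize (default : Empty → ↥ES) x' := by
    rw [← htrans]
    have : ⇑ES.subtype ∘ x' = ((↑) : ↥ES → A) ∘ x' := rfl
    rw [this]
    exact hex
  rw [BoundedFormula.realize_ex] at hexS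
  obtain ⟨c, hc⟩ := hexS
  have htrans2 := ES.subtype.map_boundedFormula φ₀ (default : Empty → ↥ES) (Fin.snoc x' c)
  rw [Unique.eq_default (⇑ES.subtype ∘ (default : Empty → ↥ES))] at htrans2
  have hcA : φ₀.Realize (default : Empty → A) (⇑ES.subtype ∘ Fin.snoc x' c) := htrans2.2 hc
  rw [Fin.comp_snoc] at hcA
  have hcoe2 : ⇑ES.subtype ∘ x' = fun i => (x i : A) := rfl
  rw [hcoe2] at hcA
  have hcB : (c : A) ∈ bigSet L G0 hκ hG hL :=
    chainSet_subset_bigSet L G0 hκ hG hL (l + 1) c.2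
  refine ⟨⟨(c : A), hcB⟩, ?_⟩
  rw [← hφ₀, LHom.realize_onBoundedFormula]
  have : ((↑) : (bigSub L G0 hκ hG hL) → A) ∘ x = fun i => (x i : A) := rfl
  rw [this]
  exact hcA

/-- The union of the chain, as an elementary substructure in the limit language. -/
noncomputable def bigES : (FL L A G0 (bigSet L G0 hκ hG hL)).ElementarySubstructure A :=
  ⟨bigSub L G0 hκ hG hL, bigSub_isElementary L G0 hκ hG hL⟩

end BigElementary

section Team

variable {κ : Cardinal.{u}}
variable (G0 : ∀ n : ℕ, Set (Set (Fin n → A)))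
variable (hκ : ℵ₀ ≤ κ) (hG : #(Σ n, ↥(G0 n)) ≤ κ) (hL : L.card ≤ κ)

theorem Cl.reindex {G : ∀ n : ℕ, Set (Set (Fin n → A))} {m n : ℕ} {X : Set (Fin m → A)}
    (h : Cl (L := L) G m X) (e : m = n) :
    Cl (L := L) G n {v : Fin n → A | (fun j => v (Fin.cast e j)) ∈ X} := by
  subst e
  exact h

/-- The carrier type of the limit elementary substructure. -/
abbrev bigT : Type u := ↥(bigES L G0 hκ hG hL)

/-- The `L`-structure on the carrier. -/
noncomputable def sB : L.Structure (bigT L G0 hκ hG hL) :=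
  letI : (L.sum (DLang L A G0 (bigSet L G0 hκ hG hL))).Structure (bigT L G0 hκ hG hL) :=
    inferInstanceAs ((FL L A G0 (bigSet L G0 hκ hG hL)).Structure (bigT L G0 hκ hG hL))
  (LHom.sumInl : L →ᴸ FL L A G0 (bigSet L G0 hκ hG hL)).reduct _

/-- The trace on `B` of a relation on `A`. -/
def traceRel {n : ℕ} (Z : Set (Fin n → A)) : Set (Fin n → bigT L G0 hκ hG hL) :=
  {v | (fun i => (v i : A)) ∈ Z}

/-- The language morphism interpreting the fresh symbols by closure symbols. -/
noncomputable def gHom {k : ℕ} {ar : Fin k → ℕ} (Y : ∀ i, Set (Fin (ar i) → A))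
    (hY : ∀ i, Cl (L := L) (Gen G0 (bigSet L G0 hκ hG hL)) (ar i) (Y i)) :
    L.sum (relLang k ar) →ᴸ FL L A G0 (bigSet L G0 hκ hG hL) :=
  LHom.sumMap (LHom.id L)
    ⟨fun {n} (f : Empty) => f.elim, fun {n} R =>
      ⟨{v | (fun j => v (Fin.cast R.2 j)) ∈ Y R.1}, Cl.reindex L (hY R.1) R.2⟩⟩

/-- The master transfer lemma. -/
theorem master {k : ℕ} {ar : Fin k → ℕ} (φ : (L.sum (relLang k ar)).Sentence)
    (Y : ∀ i, Set (Fin (ar i) → A))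
    (hY : ∀ i, Cl (L := L) (Gen G0 (bigSet L G0 hκ hG hL)) (ar i) (Y i)) :
    RealizeWith A φ Y ↔
      (letI := sB L G0 hκ hG hL
       RealizeWith (bigT L G0 hκ hG hL) φ (fun i => traceRel L G0 hκ hG hL (Y i))) := by
  letI iA : (relLang k ar).Structure A := relStructure Y
  letI := sB L G0 hκ hG hL
  letI iB : (relLang k ar).Structure (bigT L G0 hκ hG hL) :=
    relStructure (fun i => traceRel L G0 hκ hG hL (Y i))
  haveI hEA : (gHom L G0 hκ hG hL Y hY).IsExpansionOn A := by
    constructor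
    · intro n f x
      rcases f with f | f
      · rfl
      · exact f.elim
    · intro n R x
      rcases R with R | R
      · rfl
      · rfl
  haveI hEB : (gHom L G0 hκ hG hL Y hY).IsExpansionOn (bigT L G0 hκ hG hL) := by
    constructor
    · intro n f x
      rcases f with f | f
      · rfl
      · exact f.elim
    · intro n R x
      rcases R with R | R
      · rfl
      · rfl
  have h1 : RealizeWith A φ Y ↔ A ⊨ (gHom L G0 hκ hG hL Y hY).onSentence φ :=
    (LHom.realize_onSentence (M := A) (φ := gHom L G0 hκ hG hL Y hY) (ψ := φ)).symm
  have h2 : A ⊨ (gHom L G0 hκ hG hL Y hY).onSentence φ ↔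
      (bigES L G0 hκ hG hL) ⊨ (gHom L G0 hκ hG hL Y hY).onSentence φ :=
    ((bigES L G0 hκ hG hL).realize_sentence _).symm
  have h3 : (bigES L G0 hκ hG hL) ⊨ (gHom L G0 hκ hG hL Y hY).onSentence φ ↔
      RealizeWith (bigT L G0 hκ hG hL) φ (fun i => traceRel L G0 hκ hG hL (Y i)) :=
    LHom.realize_onSentence (M := bigT L G0 hκ hG hL) (φ := gHom L G0 hκ hG hL Y hY) (ψ := φ)
  exact h1.trans (h2.trans h3)

end Team

section Gadgets

/-- The sentence `∃ x⃗, R₀ x⃗` with one fresh `n`-ary symbol `R₀`. -/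
def existsSentence (n : ℕ) : (L.sum (relLang 1 (fun _ => n))).Sentence :=
  (BoundedFormula.rel (L := L.sum (relLang 1 (fun _ => n))) (α := Empty) (n := n)
    (Sum.inr ⟨0, rfl⟩) (fun i => Term.var (Sum.inr i))).exs

/-- The sentence `∀ x⃗, R₀ x⃗ → R₁ x⃗` with two fresh `n`-ary symbols. -/
def subsetSentence (n : ℕ) : (L.sum (relLang 2 (fun _ => n))).Sentence :=
  ((BoundedFormula.rel (L := L.sum (relLang 2 (fun _ => n))) (α := Empty) (n := n)
      (Sum.inr ⟨0, rfl⟩) (fun i => Term.var (Sum.inr i))).imp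
    (BoundedFormula.rel (Sum.inr ⟨1, rfl⟩) (fun i => Term.var (Sum.inr i)))).alls

theorem realizeWith_existsSentence {M : Type w} [L.Structure M] {n : ℕ}
    (S : Fin 1 → Set (Fin n → M)) :
    RealizeWith M (existsSentence L n) S ↔ (S 0).Nonempty := by
  letI := relStructure (M := M) S
  show M ⊨ existsSentence L n ↔ _
  rw [existsSentence, Sentence.Realize]
  rw [BoundedFormula.realize_exs]
  constructor
  · rintro ⟨xs, h⟩
    exact ⟨xs, h⟩
  · rintro ⟨xs, h⟩
    exact ⟨xs, h⟩

theorem realizeWith_subsetSentence {M : Type w} [L.Structure M] {n : ℕ}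
    (S : Fin 2 → Set (Fin n → M)) :
    RealizeWith M (subsetSentence L n) S ↔ S 0 ⊆ S 1 := by
  letI := relStructure (M := M) S
  show M ⊨ subsetSentence L n ↔ _
  rw [subsetSentence, Sentence.Realize]
  rw [BoundedFormula.realize_alls]
  constructor
  · intro h xs hxs
    exact h xs hxs
  · intro h xs
    exact fun hx => h hx

end Gadgets

section Consequences

theorem Cl.pullback {G : ∀ n : ℕ, Set (Set (Fin n → A))} {n : ℕ} (i : Fin n)
    {S : Set (Fin 1 → A)} (h : Cl (L := L) G 1 S) :
    Cl (L := L) G n {a : Fin n → A | (fun _ => a i) ∈ S} := by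
  set σ : Fin n → Fin (1 + n) := fun j => if j = i then ⟨0, by omega⟩ else ⟨j.val + 1, by omega⟩
    with hσdef
  have key : {a : Fin n → A | (fun _ => a i) ∈ S} = teamProj σ (teamProd S Set.univ) := by
    ext a
    constructor
    · intro ha
      set c : Fin (1 + n) → A :=
        fun p => if h0 : p.val = 0 then a i else a ⟨p.val - 1, by omega⟩ with hcdef
      refine ⟨c, ⟨?_, trivial⟩, ?_⟩
      · have hc : (fun x : Fin 1 => c (Fin.castAdd n x)) = fun _ : Fin 1 => a i := by
          funext x
          have hx : (Fin.castAdd n x).val = 0 := by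
            have := x.isLt
            simp only [Fin.coe_castAdd]
            omega
          simp only [hcdef]
          exact dif_pos hx
        rw [hc]; exact ha
      · funext j
        by_cases hj : j = i
        · have hs : σ j = ⟨0, by omega⟩ := by simp [hσdef, hj]
          show c (σ j) = a j
          rw [hs, hj]
          simp [hcdef]
        · have hs : σ j = ⟨j.val + 1, by omega⟩ := by simp [hσdef, hj]
          show c (σ j) = a j
          rw [hs]
          simp [hcdef]
    · rintro ⟨c, ⟨hc1, -⟩, rfl⟩
      have hs : σ i = ⟨0, by omega⟩ := by simp [hσdef]
      show (fun _ : Fin 1 => (c ∘ σ) i) ∈ S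
      have : (fun _ : Fin 1 => (c ∘ σ) i) = fun x : Fin 1 => c (Fin.castAdd n x) := by
        funext x
        refine congrArg c (Fin.ext ?_)
        have := x.isLt
        simp only [Function.comp_apply, hs, Fin.coe_castAdd]
        omega
      rw [this]; exact hc1
  rw [key]
  exact .proj σ (.prod h (.univ n))

theorem Cl.iInterFin {G : ∀ n : ℕ, Set (Set (Fin n → A))} {n : ℕ} :
    ∀ {m : ℕ} (E : Fin m → Set (Fin n → A)),
    (∀ j, Cl (L := L) G n (E j)) → Cl (L := L) G n (⋂ j, E j) := by
  intro m
  induction m with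
  | zero =>
    intro E _
    have : (⋂ j : Fin 0, E j) = Set.univ := by simp
    rw [this]; exact .univ n
  | succ m ih =>
    intro E hE
    have : (⋂ j : Fin (m + 1), E j) = E 0 ∩ ⋂ j : Fin m, E j.succ := by
      ext a
      simp [Fin.forall_fin_succ]
    rw [this]
    exact .inter (hE 0) (ih _ (fun j => hE j.succ))

variable {κ : Cardinal.{u}}
variable (G0 : ∀ n : ℕ, Set (Set (Fin n → A)))
variable (hκ : ℵ₀ ≤ κ) (hG : #(Σ n, ↥(G0 n)) ≤ κ) (hL : L.card ≤ κ)

theorem traceRel_nonempty {n : ℕ} {Z : Set (Fin n → A)}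
    (hZ : Cl (L := L) (Gen G0 (bigSet L G0 hκ hG hL)) n Z) (h : Z.Nonempty) :
    (traceRel L G0 hκ hG hL Z).Nonempty := by
  letI := sB L G0 hκ hG hL
  have hm : RealizeWith A (existsSentence L n) (fun _ : Fin 1 => Z) ↔
      RealizeWith (bigT L G0 hκ hG hL) (existsSentence L n)
        (fun _ : Fin 1 => traceRel L G0 hκ hG hL Z) :=
    master L G0 hκ hG hL _ _ (fun _ => hZ)
  have h1 := (realizeWith_existsSentence L (M := A) (fun _ : Fin 1 => Z)).2 h
  exact (realizeWith_existsSentence L (M := bigT L G0 hκ hG hL) _).1 (hm.1 h1)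

theorem subset_of_traceRel_subset {n : ℕ} {Z₁ Z₂ : Set (Fin n → A)}
    (h1 : Cl (L := L) (Gen G0 (bigSet L G0 hκ hG hL)) n Z₁)
    (h2 : Cl (L := L) (Gen G0 (bigSet L G0 hκ hG hL)) n Z₂)
    (h : traceRel L G0 hκ hG hL Z₁ ⊆ traceRel L G0 hκ hG hL Z₂) : Z₁ ⊆ Z₂ := by
  letI := sB L G0 hκ hG hL
  have hY : ∀ i : Fin 2, Cl (L := L) (Gen G0 (bigSet L G0 hκ hG hL)) n (![Z₁, Z₂] i) := by
    intro i
    fin_cases i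
    · exact h1
    · exact h2
  have hm : RealizeWith A (subsetSentence L n) ![Z₁, Z₂] ↔
      RealizeWith (bigT L G0 hκ hG hL) (subsetSentence L n)
        (fun i => traceRel L G0 hκ hG hL (![Z₁, Z₂] i)) :=
    master L G0 hκ hG hL _ _ hY
  have hB := (realizeWith_subsetSentence L (M := bigT L G0 hκ hG hL)
    (fun i => traceRel L G0 hκ hG hL (![Z₁, Z₂] i))).2 h
  exact (realizeWith_subsetSentence L (M := A) ![Z₁, Z₂]).1 (hm.2 hB)

theorem traceRel_inj {n : ℕ} {Z₁ Z₂ : Set (Fin n → A)}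
    (h1 : Cl (L := L) (Gen G0 (bigSet L G0 hκ hG hL)) n Z₁)
    (h2 : Cl (L := L) (Gen G0 (bigSet L G0 hκ hG hL)) n Z₂)
    (h : traceRel L G0 hκ hG hL Z₁ = traceRel L G0 hκ hG hL Z₂) : Z₁ = Z₂ :=
  subset_antisymm
    (subset_of_traceRel_subset L G0 hκ hG hL h1 h2 (le_of_eq h))
    (subset_of_traceRel_subset L G0 hκ hG hL h2 h1 (le_of_eq h.symm))

theorem traceRel_teamProj {n m : ℕ} (ι : Fin m → Fin n) {Y : Set (Fin n → A)}
    (hY : Cl (L := L) (Gen G0 (bigSet L G0 hκ hG hL)) n Y) :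
    traceRel L G0 hκ hG hL (teamProj ι Y) = teamProj ι (traceRel L G0 hκ hG hL Y) := by
  apply subset_antisymm
  · intro b hb
    obtain ⟨a, haY, hab⟩ := hb
    set E : Fin m → Set (Fin n → A) := fun j =>
      {w | (fun _ => w (ι j)) ∈ ({fun _ => (b j : A)} : Set (Fin 1 → A))} with hE
    have hCl : Cl (L := L) (Gen G0 (bigSet L G0 hκ hG hL)) n (Y ∩ ⋂ j, E j) :=
      .inter hY (Cl.iInterFin L _ fun j => Cl.pullback L (ι j)
        (.base (Or.inr ⟨(b j : A), (b j).2, rfl⟩)))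
    have hne : (Y ∩ ⋂ j, E j).Nonempty := by
      refine ⟨a, haY, Set.mem_iInter.2 fun j => ?_⟩
      show (fun _ : Fin 1 => a (ι j)) ∈ ({fun _ => (b j : A)} : Set (Fin 1 → A))
      rw [Set.mem_singleton_iff]
      funext x
      exact congrFun hab j
    obtain ⟨v, hv⟩ := traceRel_nonempty L G0 hκ hG hL hCl hne
    refine ⟨v, hv.1, ?_⟩
    funext j
    have hj : (fun _ : Fin 1 => ((v (ι j)) : A)) = fun _ => (b j : A) :=
      Set.mem_iInter.1 hv.2 j
    exact Subtype.ext (congrFun hj 0)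
  · rintro b ⟨v, hvY, rfl⟩
    exact ⟨fun i => (v i : A), hvY, rfl⟩

end Consequences

section TeamMap

variable {κ : Cardinal.{u}}
variable (G0 : ∀ n : ℕ, Set (Set (Fin n → A)))
variable (hκ : ℵ₀ ≤ κ) (hG : #(Σ n, ↥(G0 n)) ≤ κ) (hL : L.card ≤ κ)

attribute [local instance] sB

theorem traceRel_diag : traceRel L G0 hκ hG hL (diag A) = diag (bigT L G0 hκ hG hL) := by
  ext v
  constructor
  · exact fun h => Subtype.ext h
  · exact fun h => congrArg Subtype.val h

theorem traceRel_rel {n : ℕ} (R : L.Relations n) :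
    traceRel L G0 hκ hG hL (relSet L A R) = relSet L (bigT L G0 hκ hG hL) R := rfl

theorem traceRel_graph {n : ℕ} (F : L.Functions n) :
    traceRel L G0 hκ hG hL (funGraph L A F) = funGraph L (bigT L G0 hκ hG hL) F := by
  ext v
  constructor
  · exact fun h => Subtype.ext h
  · exact fun h => congrArg Subtype.val h

theorem traceRel_singleton {n : ℕ} (b : bigT L G0 hκ hG hL) :
    traceRel L G0 hκ hG hL ({fun _ => (b : A)} : Set (Fin n → A)) = {fun _ => b} := by
  ext v
  constructor
  · intro h
    have h' : (fun i => (v i : A)) = fun _ => (b : A) := h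
    exact funext fun i => Subtype.ext (congrFun h' i)
  · intro h
    have h' : v = fun _ => b := h
    show (fun i => (v i : A)) = fun _ => (b : A)
    rw [h']

/-- The domain of the team map: traces of closure relations. -/
def teamDom (n : ℕ) : Set (Set (Fin n → bigT L G0 hκ hG hL)) :=
  {X | ∃ Y, Cl (L := L) (Gen G0 (bigSet L G0 hκ hG hL)) n Y ∧ traceRel L G0 hκ hG hL Y = X}

/-- The team map itself. -/
noncomputable def teamFun (n : ℕ) (X : Set (Fin n → bigT L G0 hκ hG hL)) :
    Set (Fin n → A) :=
  open Classical in
  if h : X ∈ teamDom L G0 hκ hG hL n then Classical.choose h else ∅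

theorem teamFun_spec {n : ℕ} {X : Set (Fin n → bigT L G0 hκ hG hL)}
    (h : X ∈ teamDom L G0 hκ hG hL n) :
    Cl (L := L) (Gen G0 (bigSet L G0 hκ hG hL)) n (teamFun L G0 hκ hG hL n X) ∧
      traceRel L G0 hκ hG hL (teamFun L G0 hκ hG hL n X) = X := by
  rw [teamFun, dif_pos h]
  exact Classical.choose_spec h

theorem teamFun_traceRel {n : ℕ} {Y : Set (Fin n → A)}
    (hY : Cl (L := L) (Gen G0 (bigSet L G0 hκ hG hL)) n Y) :
    teamFun L G0 hκ hG hL n (traceRel L G0 hκ hG hL Y) = Y := by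
  have hdom : traceRel L G0 hκ hG hL Y ∈ teamDom L G0 hκ hG hL n := ⟨Y, hY, rfl⟩
  obtain ⟨h1, h2⟩ := teamFun_spec L G0 hκ hG hL hdom
  exact traceRel_inj L G0 hκ hG hL h1 hY h2

theorem teamDom_closed : IsClosedFamily L (bigT L G0 hκ hG hL) (teamDom L G0 hκ hG hL) := by
  constructor
  · exact fun n => ⟨∅, .empty n, rfl⟩
  · exact fun n => ⟨Set.univ, .univ n, rfl⟩
  · rintro n X₁ X₂ ⟨Y₁, hY₁, rfl⟩ ⟨Y₂, hY₂, rfl⟩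
    exact ⟨Y₁ ∩ Y₂, .inter hY₁ hY₂, rfl⟩
  · rintro n m X₁ X₂ ⟨Y₁, hY₁, rfl⟩ ⟨Y₂, hY₂, rfl⟩
    exact ⟨teamProd Y₁ Y₂, .prod hY₁ hY₂, rfl⟩
  · rintro n m ι X ⟨Y, hY, rfl⟩
    exact ⟨teamProj ι Y, .proj ι hY, traceRel_teamProj L G0 hκ hG hL ι hY⟩
  · exact ⟨diag A, .diag, traceRel_diag L G0 hκ hG hL⟩
  · exact fun n R => ⟨relSet L A R, .rel R, traceRel_rel L G0 hκ hG hL R⟩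
  · exact fun n F => ⟨funGraph L A F, .graph F, traceRel_graph L G0 hκ hG hL F⟩

theorem teamRan_eq (n : ℕ) :
    teamFun L G0 hκ hG hL n '' teamDom L G0 hκ hG hL n =
      {Y | Cl (L := L) (Gen G0 (bigSet L G0 hκ hG hL)) n Y} := by
  apply subset_antisymm
  · rintro Y ⟨X, hX, rfl⟩
    exact (teamFun_spec L G0 hκ hG hL hX).1
  · intro Y hY
    exact ⟨traceRel L G0 hκ hG hL Y, ⟨Y, hY, rfl⟩, teamFun_traceRel L G0 hκ hG hL hY⟩

theorem clFam_closed :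
    IsClosedFamily L A (fun n => {Y | Cl (L := L) (Gen G0 (bigSet L G0 hκ hG hL)) n Y}) := by
  constructor
  · exact fun n => .empty n
  · exact fun n => .univ n
  · exact fun n X Y hX hY => .inter hX hY
  · exact fun n m X Y hX hY => .prod hX hY
  · exact fun n m ι X hX => .proj ι hX
  · exact .diag
  · exact fun n R => .rel R
  · exact fun n F => .graph F

theorem teamFun_empty (n : ℕ) : teamFun L G0 hκ hG hL n (∅ : Set (Fin n → bigT L G0 hκ hG hL)) = ∅ := by
  have hdom : (∅ : Set (Fin n → bigT L G0 hκ hG hL)) ∈ teamDom L G0 hκ hG hL n :=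
    ⟨∅, .empty n, rfl⟩
  obtain ⟨h1, h2⟩ := teamFun_spec L G0 hκ hG hL hdom
  by_contra hne
  obtain ⟨w, hw⟩ := traceRel_nonempty L G0 hκ hG hL h1
    (Set.nonempty_iff_ne_empty.2 hne)
  rw [h2] at hw
  exact hw

/-- The partial team map from `B` to `A`. -/
noncomputable def theTeamMap : PartialTeamMap L (bigT L G0 hκ hG hL) A where
  dom := teamDom L G0 hκ hG hL
  toFun := teamFun L G0 hκ hG hL
  dom_closed := teamDom_closed L G0 hκ hG hL
  ran_closed := by
    have he : (fun n => teamFun L G0 hκ hG hL n '' teamDom L G0 hκ hG hL n) =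
        fun n => {Y | Cl (L := L) (Gen G0 (bigSet L G0 hκ hG hL)) n Y} :=
      funext (teamRan_eq L G0 hκ hG hL)
    rw [he]
    exact clFam_closed L G0 hκ hG hL
  map_empty := teamFun_empty L G0 hκ hG hL

theorem theTeamMap_elementTotal : (theTeamMap L G0 hκ hG hL).ElementTotal := by
  intro b
  exact ⟨{fun _ => (b : A)}, .base (Or.inr ⟨(b : A), b.2, rfl⟩),
    traceRel_singleton L G0 hκ hG hL b⟩

theorem theTeamMap_isElementary : (theTeamMap L G0 hκ hG hL).IsElementary := by
  intro k ar φ X hX hne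
  have hspec := fun i => teamFun_spec L G0 hκ hG hL (hX i)
  have hm := master L G0 hκ hG hL φ (fun i => teamFun L G0 hκ hG hL (ar i) (X i))
    (fun i => (hspec i).1)
  have he : (fun i => traceRel L G0 hκ hG hL (teamFun L G0 hκ hG hL (ar i) (X i))) = X :=
    funext fun i => (hspec i).2
  rw [he] at hm
  exact hm.symm

theorem theTeamMap_ran (n : ℕ) :
    (theTeamMap L G0 hκ hG hL).ran n =
      {Y | Cl (L := L) (Gen G0 (bigSet L G0 hκ hG hL)) n Y} :=
  teamRan_eq L G0 hκ hG hL n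

end TeamMap

section Counting

theorem mk_sentence_le (k : ℕ) (ar : Fin k → ℕ) :
    #((L.sum (relLang k ar)).Sentence) ≤ L.card + ℵ₀ := by
  have h1 : #((L.sum (relLang k ar)).Sentence) ≤
      #(Σ n, (L.sum (relLang k ar)).BoundedFormula Empty n) :=
    Cardinal.mk_le_of_injective (f := Sigma.mk 0) sigma_mk_injective
  have h2 := BoundedFormula.card_le (L := L.sum (relLang k ar)) (α := Empty)
  have hrel : (relLang k ar).card ≤ ℵ₀ := by
    have : Countable (relLang k ar).Symbols := by
      haveI : IsEmpty (Σ n, (relLang k ar).Functions n) := ⟨fun p => p.2.elim⟩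
      haveI : ∀ n, Countable ((relLang k ar).Relations n) := fun n =>
        inferInstanceAs (Countable {i : Fin k // ar i = n})
      exact inferInstance
    exact Cardinal.mk_le_aleph0
  have hcard : (L.sum (relLang k ar)).card ≤ L.card + ℵ₀ := by
    rw [Language.card_sum]
    simp only [Cardinal.lift_id, Cardinal.lift_uzero]
    exact add_le_add le_rfl (by
      refine le_trans (Cardinal.lift_le.2 hrel) ?_
      simp)
  refine le_trans h1 (le_trans h2 ?_)
  simp only [Cardinal.mk_empty, Cardinal.lift_zero, zero_add, Cardinal.lift_id,
    Cardinal.lift_uzero]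
  exact max_le (self_le_add_left _ _) hcard

theorem mk_ESO_le : #(ESOSentence L) ≤ L.card + ℵ₀ := by
  have hsurj : Function.Surjective (fun p : Σ (k : ULift.{u} ℕ)
      (ar : ULift.{u} (Fin k.down → ℕ)), (L.sum (relLang k.down ar.down)).Sentence =>
      (⟨p.1.down, p.2.1.down, p.2.2⟩ : ESOSentence L)) := by
    rintro ⟨k, ar, φ⟩
    exact ⟨⟨ULift.up k, ULift.up ar, φ⟩, rfl⟩
  refine le_trans (Cardinal.mk_le_of_surjective hsurj) ?_
  rw [Cardinal.mk_sigma]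
  have hbound : ∀ k : ULift.{u} ℕ,
      #(Σ ar : ULift.{u} (Fin k.down → ℕ), (L.sum (relLang k.down ar.down)).Sentence) ≤
        ℵ₀ * (L.card + ℵ₀) := by
    intro k
    rw [Cardinal.mk_sigma]
    refine le_trans (Cardinal.sum_le_sum _ (fun _ => L.card + ℵ₀)
      (fun ar => mk_sentence_le L k.down ar.down)) ?_
    rw [Cardinal.sum_const']
    exact mul_le_mul' Cardinal.mk_le_aleph0 le_rfl
  refine le_trans (Cardinal.sum_le_sum _ _ hbound) ?_
  rw [Cardinal.sum_const']
  have haleph : ℵ₀ ≤ L.card + ℵ₀ := self_le_add_left _ _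
  calc #(ULift.{u} ℕ) * (ℵ₀ * (L.card + ℵ₀)) ≤ ℵ₀ * (ℵ₀ * (L.card + ℵ₀)) := by
        exact mul_le_mul' Cardinal.mk_le_aleph0 le_rfl
    _ ≤ (L.card + ℵ₀) * ((L.card + ℵ₀) * (L.card + ℵ₀)) :=
        mul_le_mul' haleph (mul_le_mul' haleph le_rfl)
    _ = L.card + ℵ₀ := by
        rw [Cardinal.mul_eq_self haleph, Cardinal.mul_eq_self haleph]

end Counting

end AuxConstruction

/-- **Weak Löwenheim–Skolem theorem for team semantics.**
For every `τ`-structure `𝔄` and family `𝒳` of relations on `𝔄`, there are a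
`τ`-structure `𝔅` of cardinality at most `|𝒳| + |τ| + ℵ₀` and an element-total
partial elementary team map `ι : 𝔅 → 𝔄` such that `𝒳 ⊆ ran ι` and `𝔅` satisfies
every existential second-order sentence satisfied by `𝔄`. -/
theorem weak_loewenheim_skolem
    {L : FirstOrder.Language.{u, u}} {A : Type u} [L.Structure A]
    (𝒳 : ∀ n : ℕ, Set (Set (Fin n → A))) :
    ∃ (B : Type u) (sB : L.Structure B), letI := sB
      Cardinal.mk B ≤ Cardinal.mk (Σ n : ℕ, ↥(𝒳 n)) + L.card + Cardinal.aleph0 ∧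
      ∃ ι : PartialTeamMap L B A, ι.ElementTotal ∧ ι.IsElementary ∧
        (∀ n, 𝒳 n ⊆ ι.ran n) ∧
        ∀ ψ : ESOSentence L, ψ.Realize A → ψ.Realize B := by
  classical
  set κ : Cardinal.{u} := Cardinal.mk (Σ n : ℕ, ↥(𝒳 n)) + L.card + Cardinal.aleph0 with hκdef
  have hκ : Cardinal.aleph0 ≤ κ := self_le_add_left _ _
  have hL : L.card ≤ κ := le_trans (self_le_add_left _ _) (self_le_add_right _ _)
  have hLa : L.card + Cardinal.aleph0 ≤ κ :=
    le_trans (add_le_add hL hκ) (le_of_eq (Cardinal.add_eq_self hκ))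
  set Wit : ∀ n : ℕ, Set (Set (Fin n → A)) := fun n =>
    {X | ∃ (ψ : {ψ : ESOSentence L // ψ.Realize A}) (i : Fin ψ.1.k) (h : ψ.1.ar i = n),
      X = h ▸ Classical.choose ψ.2 i} with hWitdef
  set G0 : ∀ n : ℕ, Set (Set (Fin n → A)) := fun n => 𝒳 n ∪ Wit n with hG0def
  have hWit : Cardinal.mk (Σ n : ℕ, ↥(Wit n)) ≤ κ := by
    have hsurj : Function.Surjective (fun q : Σ (ψ : {ψ : ESOSentence L // ψ.Realize A}),
        ULift.{u} (Fin ψ.1.k) => (⟨q.1.1.ar q.2.down,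
          ⟨Classical.choose q.1.2 q.2.down, ⟨q.1, q.2.down, rfl, rfl⟩⟩⟩ :
          Σ n : ℕ, ↥(Wit n))) := by
      rintro ⟨n, X, ψ, i, h, hX⟩
      subst h
      subst hX
      exact ⟨⟨ψ, ULift.up i⟩, rfl⟩
    refine le_trans (Cardinal.mk_le_of_surjective hsurj) ?_
    rw [Cardinal.mk_sigma]
    refine le_trans (Cardinal.sum_le_sum _ (fun _ => Cardinal.aleph0)
      (fun ψ => Cardinal.mk_le_aleph0)) ?_
    rw [Cardinal.sum_const']
    refine le_trans (mul_le_mul'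
      (le_trans (Cardinal.mk_subtype_le _) (le_trans (mk_ESO_le L) hLa)) hκ) ?_
    exact le_of_eq (Cardinal.mul_eq_self hκ)
  have hG : Cardinal.mk (Σ n : ℕ, ↥(G0 n)) ≤ κ := by
    have key : Cardinal.mk (Σ n : ℕ, ↥(G0 n)) ≤
        Cardinal.mk (Σ n : ℕ, ↥(𝒳 n)) + Cardinal.mk (Σ n : ℕ, ↥(Wit n)) := by
      rw [Cardinal.mk_sigma, Cardinal.mk_sigma, Cardinal.mk_sigma, ← Cardinal.sum_add_distrib]
      exact Cardinal.sum_le_sum _ _ fun n => Cardinal.mk_union_le _ _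
    have h𝒳 : Cardinal.mk (Σ n : ℕ, ↥(𝒳 n)) ≤ κ :=
      le_trans (self_le_add_right _ _) (self_le_add_right _ _)
    exact le_trans key (le_trans (add_le_add h𝒳 hWit) (le_of_eq (Cardinal.add_eq_self hκ)))
  refine ⟨bigT L G0 hκ hG hL, sB L G0 hκ hG hL, ?_⟩
  refine ⟨mk_bigSet_le L G0 hκ hG hL, theTeamMap L G0 hκ hG hL,
    theTeamMap_elementTotal L G0 hκ hG hL, theTeamMap_isElementary L G0 hκ hG hL, ?_, ?_⟩
  · intro n X hX
    rw [theTeamMap_ran L G0 hκ hG hL n]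
    exact Cl.base (Or.inl (Or.inl hX))
  · intro ψ hψ
    have hCl : ∀ i : Fin ψ.k, Cl (L := L) (Gen G0 (bigSet L G0 hκ hG hL)) (ψ.ar i)
        (Classical.choose ((⟨ψ, hψ⟩ : {ψ : ESOSentence L // ψ.Realize A})).2 i) :=
      fun i => .base (Or.inl (Or.inr ⟨⟨ψ, hψ⟩, i, rfl, rfl⟩))
    have hS := Classical.choose_spec ((⟨ψ, hψ⟩ : {ψ : ESOSentence L // ψ.Realize A})).2
    exact ⟨_, (master L G0 hκ hG hL ψ.toSentence _ hCl).1 hS⟩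

end TeamSem
end
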